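/- arXiv:2603.23908 — 2 statements merged into one kernel-verified Lean document; each statement's English description precedes it below -/
import Mathlib

section
/- Product estimate, anisotropic version (Lemma 5.3, bounds (prod1) and (prod3)): Let s > (d+1)/2. There is a constant C, depending on d, s and k, such that for every f ∈ H^{s−1,1/2}(𝕋^d) and every u ∈ H^{0,1/2}(𝕋^d), the product fu lies in H^{0,1/2}(𝕋^d) and ‖fu‖_{H^{0,1/2}} ≤ C ‖f‖_{H^{s−1,1/2}} ‖u‖_{H^{0,1/2}}. In particular ‖fu‖_{H^{0,1/2}} ≤ C' ‖f‖_{H^{s−1/2}} ‖u‖_{H^{0,1/2}} for all f ∈ H^{s−1/2}(𝕋^d). -/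
noncomputable section
open scoped BigOperators
open Filter

/-- The frequency lattice `ℤ^d` of the torus `𝕋^d`. -/
abbrev Freq (d : ℕ) := Fin d → ℤ

/-- A function on `𝕋^d`, represented by its sequence of Fourier coefficients. -/
abbrev Coeffs (d : ℕ) := Freq d → ℂ

variable {d : ℕ}

/-- The pairing `⟨j, k⟩` between a lattice frequency and the frequency vector `k ∈ ℝ^d`. -/
def dotk (k : Fin d → ℝ) (j : Freq d) : ℝ := ∑ i, (j i : ℝ) * k i

/-- The Japanese bracket `⟨j⟩ = (1+|j|²)^{1/2}`. -/
def jb (j : Freq d) : ℝ := Real.sqrt (1 + ∑ i, ((j i : ℝ)) ^ 2)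

/-- The entries of `k` are linearly independent over `ℚ` (equivalently, over `ℤ`). -/
def Indep (k : Fin d → ℝ) : Prop := ∀ j : Freq d, dotk k j = 0 → j = 0

/-- The weight defining the anisotropic Sobolev norm `H^{s,θ}`. -/
def wt (k : Fin d → ℝ) (s θ : ℝ) (j : Freq d) : ℝ :=
  jb j ^ (2 * s) * (1 + (dotk k j) ^ 2) ^ θ

/-- Membership in the anisotropic Sobolev space `H^{s,θ}(𝕋^d)`. -/
def MemSob (k : Fin d → ℝ) (s θ : ℝ) (u : Coeffs d) : Prop :=
  Summable (fun j : Freq d => wt k s θ j * ‖u j‖ ^ 2)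

/-- The `H^{s,θ}(𝕋^d)` norm. -/
def sobNorm (k : Fin d → ℝ) (s θ : ℝ) (u : Coeffs d) : ℝ :=
  Real.sqrt (∑' j : Freq d, wt k s θ j * ‖u j‖ ^ 2)

/-- Membership in the Sobolev space `H^s(𝕋^d)`; `H^0 = L²`. -/
def MemHs (s : ℝ) (u : Coeffs d) : Prop :=
  Summable (fun j : Freq d => jb j ^ (2 * s) * ‖u j‖ ^ 2)

/-- The `H^s(𝕋^d)` norm; for `s = 0` this is the `L²(𝕋^d)` norm (spectrally normalized). -/
def HsNorm (s : ℝ) (u : Coeffs d) : ℝ :=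
  Real.sqrt (∑' j : Freq d, jb j ^ (2 * s) * ‖u j‖ ^ 2)

/-- The value of the function with Fourier coefficients `u` at the point `α ∈ 𝕋^d = ℝ^d/(2πℤ)^d`,
namely `Σ_j û_j e^{i⟨j,α⟩}`. -/
def value (u : Coeffs d) (α : Fin d → ℝ) : ℂ :=
  ∑' j : Freq d, u j * Complex.exp (Complex.I * ((∑ i, (j i : ℝ) * α i : ℝ) : ℂ))

/-- The squared norm of the space `ℋ^σ = H^σ × H^{σ,1/2}`. -/
def HHnormSq (k : Fin d → ℝ) (σ : ℝ) (W R : Coeffs d) : ℝ :=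
  HsNorm σ W ^ 2 + sobNorm k σ (1/2) R ^ 2

/-- The norm of the space `ℋ^σ = H^σ × H^{σ,1/2}`. -/
def HHnorm (k : Fin d → ℝ) (σ : ℝ) (W R : Coeffs d) : ℝ :=
  Real.sqrt (HHnormSq k σ W R)

/-- Membership in `ℋ^σ = H^σ × H^{σ,1/2}`. -/
def MemHH (k : Fin d → ℝ) (σ : ℝ) (W R : Coeffs d) : Prop :=
  MemHs σ W ∧ MemSob k σ (1/2) R

/-- The directional derivative `∂_α = k₁∂₁+⋯+k_d∂_d`, acting on Fourier coefficients
by multiplication by `i⟨j,k⟩`. -/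
def dAl (k : Fin d → ℝ) (u : Coeffs d) : Coeffs d :=
  fun j => Complex.I * (dotk k j : ℝ) * u j

/-- The projection `P`: the Fourier multiplier which is `1` for `⟨j,k⟩ < 0`, `1/2`
at the zero mode, `0` for `⟨j,k⟩ > 0`. -/
def Pp (k : Fin d → ℝ) (u : Coeffs d) : Coeffs d := fun j =>
  if dotk k j < 0 then u j else if dotk k j = 0 then u j / 2 else 0

/-- The complementary projection `P̄ = I - P`. -/
def Pb (k : Fin d → ℝ) (u : Coeffs d) : Coeffs d := u - Pp k u

/-- The Fourier coefficients of the complex conjugate function. -/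
def conjC (u : Coeffs d) : Coeffs d := fun j => (starRingEnd ℂ) (u (-j))

/-- The Fourier coefficients of the product of two functions (convolution). -/
def cmul (u v : Coeffs d) : Coeffs d := fun j => ∑' m : Freq d, u m * v (j - m)

/-- The Fourier coefficients of the constant function `1`. -/
def oneC : Coeffs d := fun j => if j = 0 then 1 else 0

/-- `u` is holomorphic: its Fourier coefficients vanish for `⟨j,k⟩ > 0`. -/
def Holo (k : Fin d → ℝ) (u : Coeffs d) : Prop := ∀ j : Freq d, 0 < dotk k j → u j = 0

/-- The coefficients of `2 Re u`. -/
def twoRe (u : Coeffs d) : Coeffs d := u + conjC u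

/-- The coefficients of `2 Im u`. -/
def twoIm (u : Coeffs d) : Coeffs d := fun j => (u j - conjC u j) / Complex.I

/-- The coefficients of `u²`. -/
def csq (u : Coeffs d) : Coeffs d := cmul u u

/-- The coefficients of `|u|² = u·conj(u)`. -/
def absSqC (u : Coeffs d) : Coeffs d := cmul u (conjC u)

/-- The advection velocity `b := 2 Re P[R(1-conj Y)]`. -/
def bC (k : Fin d → ℝ) (R Y : Coeffs d) : Coeffs d :=
  twoRe (Pp k (cmul R (oneC - conjC Y)))

/-- The frequency shift `a := i(P̄[conj(R)·R_α] - P[R·conj(R)_α])`. -/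
def aCf (k : Fin d → ℝ) (R : Coeffs d) : Coeffs d := fun j =>
  Complex.I * ((Pb k (cmul (conjC R) (dAl k R)) - Pp k (cmul R (dAl k (conjC R)))) j)

/-- The auxiliary function
`M := P̄[conj(R)·Y_α − R_α·conj(Y)] + P[R·conj(Y)_α − conj(R)_α·Y]`. -/
def MCf (k : Fin d → ℝ) (R Y : Coeffs d) : Coeffs d :=
  Pb k (cmul (conjC R) (dAl k Y) - cmul (dAl k R) (conjC Y))
    + Pp k (cmul R (dAl k (conjC Y)) - cmul (dAl k (conjC R)) Y)

/-- `(W,R,Y)` solves the differentiated gravity water wave system on the time interval `I`: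
`𝐖_t + b·𝐖_α + (1+𝐖)(1−conj Y)·R_α = (1+𝐖)M` and `R_t + b·R_α = i(Y − a(1−Y))`,
where `Y = 𝐖/(1+𝐖)` (equivalently `(1+𝐖)·Y = 𝐖`), so that
`(1+𝐖)/(1+conj 𝐖) = (1+𝐖)(1−conj Y)` and `i(𝐖−a)/(1+𝐖) = i(Y − a(1−Y))`. -/
structure IsWWSol (k : Fin d → ℝ) (I : Set ℝ) (W R Y : ℝ → Coeffs d) : Prop where
  holoW : ∀ t ∈ I, Holo k (W t)
  holoR : ∀ t ∈ I, Holo k (R t)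
  Ymem : ∀ t ∈ I, MemHs 0 (Y t)
  Ydef : ∀ t ∈ I, cmul (oneC + W t) (Y t) = W t
  eqW : ∀ t ∈ I, ∀ j : Freq d,
    HasDerivWithinAt (fun τ => W τ j)
      ((cmul (oneC + W t) (MCf k (R t) (Y t))
        - cmul (bC k (R t) (Y t)) (dAl k (W t))
        - cmul (cmul (oneC + W t) (oneC - conjC (Y t))) (dAl k (R t))) j) I t
  eqR : ∀ t ∈ I, ∀ j : Freq d,
    HasDerivWithinAt (fun τ => R τ j)
      ((Complex.I • (Y t - cmul (aCf k (R t)) (oneC - Y t))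
        - cmul (bC k (R t) (Y t)) (dAl k (R t))) j) I t

section PAux
open scoped ENNReal NNReal
open MeasureTheory

lemma PA_holder {ι : Type*} [Countable ι] {p q : ℝ} (hpq : p.HolderConjugate q)
    (a b : ι → ℝ≥0∞) :
    ∑' i, a i * b i ≤ (∑' i, a i ^ p) ^ (1/p) * (∑' i, b i ^ q) ^ (1/q) := by
  letI : MeasurableSpace ι := ⊤
  haveI : MeasurableSingletonClass ι := ⟨fun _ => trivial⟩
  rw [← lintegral_count, ← lintegral_count, ← lintegral_count]
  exact ENNReal.lintegral_mul_le_Lp_mul_Lq _ hpq (measurable_of_countable _).aemeasurable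
    (measurable_of_countable _).aemeasurable

lemma PA_cs {ι : Type*} [Countable ι] (a b : ι → ℝ≥0∞) :
    (∑' i, a i * b i) ^ 2 ≤ (∑' i, a i ^ 2) * (∑' i, b i ^ 2) := by
  have h2 : (2:ℝ).HolderConjugate 2 := by constructor <;> norm_num
  have h := PA_holder h2 a b
  simp only [ENNReal.rpow_two] at h
  calc (∑' i, a i * b i) ^ 2
      ≤ ((∑' i, a i ^ 2) ^ (1/(2:ℝ)) * (∑' i, b i ^ 2) ^ (1/(2:ℝ)))^2 := pow_le_pow_left' h 2
    _ = (∑' i, a i ^ 2) * (∑' i, b i ^ 2) := by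
        rw [mul_pow, ← ENNReal.rpow_natCast (_ ^ (1/(2:ℝ))), ← ENNReal.rpow_natCast (_ ^ (1/(2:ℝ))),
          ← ENNReal.rpow_mul, ← ENNReal.rpow_mul]
        norm_num

lemma PA_sumZ_nat {σ : ℝ} (hσ : 1/2 < σ) :
    Summable (fun n : ℕ => ((1:ℝ) + (n:ℝ)^2)^(-σ)) := by
  have hs : Summable (fun n : ℕ => ((n:ℝ)+1) ^ (-(2*σ))) := by
    have := (Real.summable_nat_rpow (p := -(2*σ))).2 (by linarith)
    have h1 := (summable_nat_add_iff (f := fun n : ℕ => (n:ℝ) ^ (-(2*σ))) 1).2 this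
    refine h1.congr fun n => ?_
    push_cast; ring_nf
  refine Summable.of_nonneg_of_le (fun n => Real.rpow_nonneg (by positivity) _)
    (fun n => ?_) (hs.mul_left ((2:ℝ)^σ))
  have hb : ((n:ℝ)+1)^2 ≤ 2 * (1 + (n:ℝ)^2) := by nlinarith [sq_nonneg ((n:ℝ) - 1)]
  have h1 : ((n:ℝ)+1) ^ (-(2*σ)) = (((n:ℝ)+1)^2) ^ (-σ) := by
    rw [← Real.rpow_natCast ((n:ℝ)+1) 2, ← Real.rpow_mul (by positivity)]
    congr 1; push_cast; ring
  have h2 : ((1:ℝ) + (n:ℝ)^2)^(-σ) = ((2:ℝ)^σ) * ((2 * (1 + (n:ℝ)^2)) ^ (-σ)) := by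
    rw [Real.mul_rpow (by norm_num) (add_nonneg zero_le_one (sq_nonneg (n:ℝ))), ← mul_assoc,
      ← Real.rpow_add (by norm_num), add_neg_cancel, Real.rpow_zero, one_mul]
  rw [h1, h2]
  have h3 : (2 * (1 + (n:ℝ)^2)) ^ (-σ) ≤ (((n:ℝ)+1)^2) ^ (-σ) :=
    Real.rpow_le_rpow_of_nonpos (by positivity) hb (by linarith)
  exact mul_le_mul_of_nonneg_left h3 (Real.rpow_nonneg (by norm_num) σ)

lemma PA_sumZ {σ : ℝ} (hσ : 1/2 < σ) :
    Summable (fun t : ℤ => ((1:ℝ) + (t:ℝ)^2)^(-σ)) := by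
  refine Summable.of_nat_of_neg (PA_sumZ_nat hσ) ?_
  refine (PA_sumZ_nat hσ).congr fun n => ?_
  push_cast; ring_nf

lemma PA_tsum_ofReal_ne_top {ι : Type*} {f : ι → ℝ} (hf : Summable f) (h0 : ∀ i, 0 ≤ f i) :
    ∑' i, ENNReal.ofReal (f i) ≠ ⊤ := by
  rw [← ENNReal.ofReal_tsum_of_nonneg h0 hf]
  exact ENNReal.ofReal_ne_top

lemma PA_sqrt_add (a b : ℝ) (ha : 0 ≤ a) (hb : 0 ≤ b) :
    Real.sqrt (a + b) ≤ Real.sqrt a + Real.sqrt b := by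
  have h : a + b ≤ (Real.sqrt a + Real.sqrt b)^2 := by
    have := Real.sq_sqrt ha; have := Real.sq_sqrt hb
    nlinarith [mul_nonneg (Real.sqrt_nonneg a) (Real.sqrt_nonneg b)]
  calc Real.sqrt (a+b) ≤ Real.sqrt ((Real.sqrt a + Real.sqrt b)^2) := Real.sqrt_le_sqrt h
    _ = _ := Real.sqrt_sq (by positivity)

lemma PA_rpow_comparison {a b M σ : ℝ} (ha : 0 < a) (hM : 0 < M) (h : a ≤ M * b) (hσ : 0 ≤ σ) :
    b ^ (-σ) ≤ M^σ * a^(-σ) := by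
  have hb : a / M ≤ b := (div_le_iff₀' hM).mpr h
  have h1 : b ^ (-σ) ≤ (a / M) ^ (-σ) :=
    Real.rpow_le_rpow_of_nonpos (by positivity) hb (by linarith)
  have h2 : (a / M) ^ (-σ) = M^σ * a^(-σ) := by
    rw [div_eq_mul_inv, Real.mul_rpow ha.le (by positivity), ← Real.rpow_neg_one M,
      ← Real.rpow_mul hM.le]
    ring_nf
  rw [h2] at h1; exact h1

lemma PA_floor_sq (x : ℝ) : 1 + (⌊x⌋:ℝ)^2 ≤ 4 * (1 + x^2) := by
  have h1 : (⌊x⌋:ℝ) ≤ x := Int.floor_le x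
  have h2 : x < (⌊x⌋:ℝ) + 1 := Int.lt_floor_add_one x
  rcases le_or_gt 0 (⌊x⌋:ℝ) with h | h
  · nlinarith
  · have h3 : (⌊x⌋:ℝ) + 1 ≤ 0 := by
      have : ⌊x⌋ < 0 := by exact_mod_cast h
      have : ⌊x⌋ + 1 ≤ 0 := by omega
      exact_mod_cast this
    nlinarith [sq_nonneg (3*(⌊x⌋:ℝ)+4)]

-- local copies of a2 lemmas for this test file

lemma PA_uniformZ_pos {κ : ℝ} (hκ : 0 < κ) {σ : ℝ} (hσ : 1/2 < σ) :
    ∃ C : ℝ≥0∞, C ≠ ⊤ ∧ ∀ b : ℝ,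
      ∑' t : ℤ, ENNReal.ofReal ((1 + (κ*(t:ℝ) - b)^2)^(-σ)) ≤ C := by
  obtain ⟨N, hNr⟩ : ∃ N : ℕ, 1/κ < (N:ℝ) :=
    ⟨⌊1/κ⌋₊ + 1, by push_cast; exact Nat.lt_floor_add_one _⟩
  refine ⟨(N : ℝ≥0∞) * (ENNReal.ofReal ((4:ℝ)^σ) * ∑' ℓ : ℤ, ENNReal.ofReal ((1+(ℓ:ℝ)^2)^(-σ))),
    ?_, fun b => ?_⟩
  · refine ENNReal.mul_ne_top (by simp) (ENNReal.mul_ne_top ENNReal.ofReal_ne_top ?_)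
    exact PA_tsum_ofReal_ne_top (PA_sumZ hσ) (fun i => Real.rpow_nonneg (by positivity) _)
  · set c : ℤ → ℤ := fun ℓ => ⌈((ℓ:ℝ)+b)/κ⌉ with hc
    have hfacts : ∀ t : ℤ, 0 ≤ t - c ⌊κ*(t:ℝ) - b⌋ ∧ (t - c ⌊κ*(t:ℝ) - b⌋) < (N:ℤ) := by
      intro t
      set x : ℝ := κ*(t:ℝ) - b with hx
      have hfl : (⌊x⌋:ℝ) ≤ x := Int.floor_le x
      have hfu : x < (⌊x⌋:ℝ) + 1 := Int.lt_floor_add_one x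
      have h1 : ((⌊x⌋:ℝ)+b)/κ ≤ (t:ℝ) := by
        rw [div_le_iff₀ hκ]; nlinarith
      have hct : c ⌊x⌋ ≤ t := by
        rw [hc]; exact Int.ceil_le.mpr h1
      have h2 : ((t:ℝ) - (c ⌊x⌋ : ℤ)) < 1/κ := by
        have hle : ((⌊x⌋:ℝ)+b)/κ ≤ ((c ⌊x⌋ : ℤ):ℝ) := by rw [hc]; exact Int.le_ceil _
        have ht : (t:ℝ) < ((⌊x⌋:ℝ)+1+b)/κ := by
          rw [lt_div_iff₀ hκ]; nlinarith
        have : ((⌊x⌋:ℝ)+1+b)/κ - ((⌊x⌋:ℝ)+b)/κ = 1/κ := by field_simp; ring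
        linarith
      have h3 : ((t - c ⌊x⌋ : ℤ):ℝ) < (N:ℝ) := by
        push_cast; linarith
      constructor
      · omega
      · exact_mod_cast h3
    set ι : ℤ → ℤ × Fin N := fun t =>
      (⌊κ*(t:ℝ) - b⌋, ⟨(t - c ⌊κ*(t:ℝ) - b⌋).toNat, by
        have := hfacts t; omega⟩) with hι
    have hinj : Function.Injective ι := by
      intro t1 t2 h
      have hf1 := (hfacts t1).1
      have hf2 := (hfacts t2).1
      rw [hι] at h
      simp only [Prod.mk.injEq, Fin.mk.injEq] at h
      obtain ⟨hfl, hnat⟩ := h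
      rw [hfl] at hf1 hnat
      omega
    set G : ℤ × Fin N → ℝ≥0∞ := fun p =>
      ENNReal.ofReal ((4:ℝ)^σ) * ENNReal.ofReal ((1+((p.1:ℤ):ℝ)^2)^(-σ)) with hG
    have hpt : ∀ t : ℤ, ENNReal.ofReal ((1 + (κ*(t:ℝ) - b)^2)^(-σ)) ≤ G (ι t) := by
      intro t
      set x : ℝ := κ*(t:ℝ) - b with hx
      have hcomp : (1+x^2) ^ (-σ) ≤ (4:ℝ)^σ * (1+(⌊x⌋:ℝ)^2)^(-σ) :=
        PA_rpow_comparison (by positivity) (by norm_num) (PA_floor_sq x) (by linarith)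
      refine le_trans (ENNReal.ofReal_le_ofReal hcomp) ?_
      rw [ENNReal.ofReal_mul (by positivity)]
    calc ∑' t : ℤ, ENNReal.ofReal ((1 + (κ*(t:ℝ) - b)^2)^(-σ))
        ≤ ∑' t : ℤ, G (ι t) := ENNReal.tsum_le_tsum hpt
      _ ≤ ∑' p : ℤ × Fin N, G p := ENNReal.tsum_comp_le_tsum_of_injective hinj G
      _ = (N : ℝ≥0∞) * (ENNReal.ofReal ((4:ℝ)^σ) * ∑' ℓ : ℤ, ENNReal.ofReal ((1+(ℓ:ℝ)^2)^(-σ))) := by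
          rw [ENNReal.tsum_prod']
          rw [show (∑' (a : ℤ) (b : Fin N), G (a, b)) = ∑' (a : ℤ), (N:ℝ≥0∞) *
              (ENNReal.ofReal ((4:ℝ)^σ) * ENNReal.ofReal ((1+((a:ℤ):ℝ)^2)^(-σ))) from
            tsum_congr fun a => by
              rw [tsum_fintype]
              simp [hG, Finset.sum_const, nsmul_eq_mul, mul_assoc]]
          rw [ENNReal.tsum_mul_left, ENNReal.tsum_mul_left]

lemma PA_uniformZ {κ : ℝ} (hκ : κ ≠ 0) {σ : ℝ} (hσ : 1/2 < σ) :
    ∃ C : ℝ≥0∞, C ≠ ⊤ ∧ ∀ b : ℝ,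
      ∑' t : ℤ, ENNReal.ofReal ((1 + (κ*(t:ℝ) - b)^2)^(-σ)) ≤ C := by
  rcases hκ.lt_or_gt with h | h
  · obtain ⟨C, hC, hbd⟩ := PA_uniformZ_pos (neg_pos.mpr h) hσ
    refine ⟨C, hC, fun b => ?_⟩
    have := (Equiv.neg ℤ).tsum_eq (fun t : ℤ => ENNReal.ofReal ((1 + (κ*(t:ℝ) - b)^2)^(-σ)))
    rw [← this]
    refine le_trans (le_of_eq (tsum_congr fun t => ?_)) (hbd b)
    simp only [Equiv.neg_apply]
    push_cast
    ring_nf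
  · exact PA_uniformZ_pos h hσ

lemma PA_lemma1D {κ η : ℝ} (hκ : κ ≠ 0) (hη : 0 < η) :
    ∃ C : ℝ≥0∞, C ≠ ⊤ ∧ ∀ b : ℝ,
      ∑' t : ℤ, ENNReal.ofReal ((1+(t:ℝ)^2)^(-η)) *
        ENNReal.ofReal ((1+(κ*(t:ℝ) - b)^2)^(-(1/2:ℝ))) ≤ C := by
  set p : ℝ := max 2 (1/η) with hp
  have hp1 : 1 < p := lt_of_lt_of_le one_lt_two (le_max_left _ _)
  have hpq : p.HolderConjugate (Real.conjExponent p) := Real.HolderConjugate.conjExponent hp1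
  set q : ℝ := Real.conjExponent p with hq
  have hq1 : 1 < q := hpq.symm.lt
  have hηp : 1/2 < η * p := by
    have : 1/η ≤ p := le_max_right _ _
    have h1 : 1 ≤ p * η := (div_le_iff₀ hη).mp this
    nlinarith
  have hσ : 1/2 < q/2 := by linarith
  obtain ⟨CU, hCU, hCUb⟩ := PA_uniformZ hκ hσ
  have hA := PA_tsum_ofReal_ne_top (PA_sumZ hηp)
    (fun i => Real.rpow_nonneg (by positivity) _)
  refine ⟨(∑' t : ℤ, ENNReal.ofReal ((1+(t:ℝ)^2)^(-(η*p)))) ^ (1/p) * CU ^ (1/q),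
    ENNReal.mul_ne_top (ENNReal.rpow_ne_top_of_nonneg (by positivity) hA)
      (ENNReal.rpow_ne_top_of_nonneg (by positivity) hCU), fun b => ?_⟩
  refine le_trans (PA_holder hpq _ _) ?_
  have e1 : ∀ t : ℤ, (ENNReal.ofReal ((1+(t:ℝ)^2)^(-η))) ^ p
      = ENNReal.ofReal ((1+(t:ℝ)^2)^(-(η*p))) := by
    intro t
    rw [ENNReal.ofReal_rpow_of_pos (by positivity)]
    congr 1
    rw [← Real.rpow_mul (by positivity)]
    ring_nf
  have e2 : ∀ t : ℤ, (ENNReal.ofReal ((1+(κ*(t:ℝ) - b)^2)^(-(1/2:ℝ)))) ^ q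
      = ENNReal.ofReal ((1+(κ*(t:ℝ) - b)^2)^(-(q/2))) := by
    intro t
    rw [ENNReal.ofReal_rpow_of_pos (by positivity)]
    congr 1
    rw [← Real.rpow_mul (by positivity)]
    ring_nf
  rw [tsum_congr e1, tsum_congr e2]
  exact mul_le_mul_right (ENNReal.rpow_le_rpow (hCUb b) (by positivity)) _

lemma PA_tsum_pi_prod (e : ℕ) (h : ℤ → ℝ≥0∞) :
    ∑' m : (Fin e → ℤ), ∏ i, h (m i) = (∑' t : ℤ, h t) ^ e := by
  induction e with
  | zero =>
      rw [pow_zero]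
      have : ∀ m : (Fin 0 → ℤ), ∏ i, h (m i) = 1 := fun m => by simp
      rw [tsum_congr this, tsum_eq_single (fun i => (0:ℤ)) (fun b hb => absurd (Subsingleton.elim b _) hb)]
  | succ e ih =>
      have heq := (Fin.consEquiv (fun _ : Fin (e+1) => ℤ)).tsum_eq
        (f := fun m : Fin (e+1) → ℤ => ∏ i, h (m i))
      rw [← heq]
      have : ∀ p : ℤ × (Fin e → ℤ), (∏ i, h ((Fin.consEquiv (fun _ : Fin (e+1) => ℤ)) p i))
          = h p.1 * ∏ i : Fin e, h (p.2 i) := by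
        intro p
        simp only [Fin.consEquiv_apply]
        rw [Fin.prod_univ_succ]
        simp
      rw [tsum_congr this, ENNReal.tsum_prod']
      simp_rw [ENNReal.tsum_mul_left]
      rw [ENNReal.tsum_mul_right, ih, pow_succ, mul_comm]

lemma PA_jb_sq (m : Freq d) : jb m ^ 2 = 1 + ∑ i, ((m i : ℝ))^2 := by
  rw [jb, Real.sq_sqrt]
  positivity

lemma PA_jb_one_le (m : Freq d) : 1 ≤ jb m := by
  rw [jb, show (1:ℝ) = Real.sqrt 1 from (Real.sqrt_one).symm]
  apply Real.sqrt_le_sqrt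
  have : 0 ≤ ∑ i, ((m i : ℝ))^2 := by positivity
  rw [Real.sqrt_one]
  linarith

lemma PA_jb_pos (m : Freq d) : 0 < jb m := lt_of_lt_of_le one_pos (PA_jb_one_le m)

lemma PA_sumPi (e : ℕ) {q : ℝ} (hq : (e:ℝ) < q) :
    ∑' m : Freq e, ENNReal.ofReal (jb m ^ (-q)) ≠ ⊤ := by
  rcases Nat.eq_zero_or_pos e with rfl | he
  · have hb : ∀ m : Freq 0, ENNReal.ofReal (jb m ^ (-q)) ≤ 1 := by
      intro m
      rw [show (1:ℝ≥0∞) = ENNReal.ofReal 1 by simp]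
      exact ENNReal.ofReal_le_ofReal
        (Real.rpow_le_one_of_one_le_of_nonpos (PA_jb_one_le m) (by norm_num at hq ⊢; linarith))
    refine ne_top_of_le_ne_top (b := ∑' _ : Freq 0, (1:ℝ≥0∞)) ?_ (ENNReal.tsum_le_tsum hb)
    rw [tsum_eq_single (fun i => (0:ℤ)) (fun b hb' => absurd (Subsingleton.elim b _) hb')]
    exact ENNReal.one_ne_top
  · set r : ℝ := q / (2*e) with hr
    have hre : (0:ℝ) < e := by exact_mod_cast he
    have hr2 : 1/2 < r := by
      rw [hr, lt_div_iff₀ (by positivity)]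
      nlinarith
    have hpt : ∀ m : Freq e, ENNReal.ofReal (jb m ^ (-q))
        ≤ ∏ i, ENNReal.ofReal (((1:ℝ)+((m i):ℝ)^2)^(-r)) := by
      intro m
      rw [← ENNReal.ofReal_prod_of_nonneg (fun i _ => Real.rpow_nonneg (by positivity) _)]
      apply ENNReal.ofReal_le_ofReal
      have hprod : ∏ i, ((1:ℝ)+((m i):ℝ)^2) ≤ (jb m ^ 2) ^ (e:ℕ) := by
        have : ∀ i ∈ Finset.univ, ((1:ℝ)+((m i):ℝ)^2) ≤ jb m ^ 2 := by
          intro i _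
          rw [PA_jb_sq]
          have h1 : ((m i:ℝ))^2 ≤ ∑ i', ((m i' : ℝ))^2 :=
            Finset.single_le_sum (f := fun i' => ((m i':ℝ))^2) (fun i' _ => by positivity)
              (Finset.mem_univ i)
          linarith
        calc ∏ i, ((1:ℝ)+((m i):ℝ)^2) ≤ ∏ _i : Fin e, (jb m ^2) :=
              Finset.prod_le_prod (fun i _ => by positivity) this
          _ = (jb m ^ 2) ^ (e:ℕ) := by rw [Finset.prod_const]; simp
      have hstep : (∏ i, ((1:ℝ)+((m i):ℝ)^2)) ^ r ≤ jb m ^ q := by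
        calc (∏ i, ((1:ℝ)+((m i):ℝ)^2)) ^ r ≤ ((jb m ^2) ^ (e:ℕ)) ^ r := by
              apply Real.rpow_le_rpow (by positivity) hprod (by positivity)
          _ = jb m ^ q := by
              rw [← Real.rpow_natCast (jb m ^ 2) e, ← Real.rpow_mul (by positivity),
                ← Real.rpow_natCast (jb m) 2, ← Real.rpow_mul (PA_jb_pos m).le]
              congr 1
              field_simp [hr]
              rw [hr]; field_simp [hre.ne']; push_cast; ring
      calc jb m ^ (-q) = (jb m ^ q)⁻¹ := by
            rw [Real.rpow_neg (PA_jb_pos m).le]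
        _ ≤ ((∏ i, ((1:ℝ)+((m i):ℝ)^2)) ^ r)⁻¹ := by
            apply inv_anti₀ (by positivity) hstep
        _ = (∏ i, ((1:ℝ)+((m i):ℝ)^2)) ^ (-r) := by
            rw [Real.rpow_neg (Finset.prod_nonneg (fun i _ => by positivity))]
        _ = ∏ i, ((1:ℝ)+((m i):ℝ)^2)^(-r) :=
            (Real.finset_prod_rpow _ _ (fun i _ => by positivity) _).symm
    refine ne_top_of_le_ne_top ?_ (ENNReal.tsum_le_tsum hpt)
    rw [PA_tsum_pi_prod e (fun t => ENNReal.ofReal (((1:ℝ)+(t:ℝ)^2)^(-r)))]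
    exact ENNReal.pow_ne_top (PA_tsum_ofReal_ne_top (PA_sumZ hr2)
      (fun i => Real.rpow_nonneg (by positivity) _))

lemma PA_dotk_cons (e : ℕ) (k : Fin (e+1) → ℝ) (t : ℤ) (m' : Freq e) :
    dotk k (Fin.cons t m') = k 0 * (t:ℝ) + dotk (fun i => k i.succ) m' := by
  rw [dotk, Fin.sum_univ_succ, dotk]
  simp [mul_comm]

lemma PA_key (e : ℕ) (k : Fin (e+1) → ℝ) (hk0 : k 0 ≠ 0) {p : ℝ} (hp : (e:ℝ) < p) :
    ∃ C : ℝ≥0∞, C ≠ ⊤ ∧ ∀ c : ℝ, ∑' m : Freq (e+1),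
      ENNReal.ofReal (jb m ^ (-p)) *
        ENNReal.ofReal ((1+(dotk k m - c)^2)^(-(1/2:ℝ))) ≤ C := by
  have hep : (0:ℝ) ≤ e := by positivity
  set η : ℝ := (p - e)/2 with hηdef
  have hη : 0 < η := by rw [hηdef]; linarith
  set q : ℝ := p - η with hqdef
  have hq : (e:ℝ) < q := by rw [hqdef, hηdef]; linarith
  have hq0 : 0 ≤ q := by linarith
  obtain ⟨C₁, hC₁, hC₁b⟩ := PA_lemma1D (κ := k 0) hk0 (half_pos hη)
  refine ⟨(∑' m' : Freq e, ENNReal.ofReal (jb m' ^ (-q))) * C₁,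
    ENNReal.mul_ne_top (PA_sumPi e hq) hC₁, fun c => ?_⟩
  have heq := (Fin.consEquiv (fun _ : Fin (e+1) => ℤ)).tsum_eq
    (f := fun m : Freq (e+1) => ENNReal.ofReal (jb m ^ (-p)) *
      ENNReal.ofReal ((1+(dotk k m - c)^2)^(-(1/2:ℝ))))
  rw [← heq]
  have hpt : ∀ pr : ℤ × Freq e,
      ENNReal.ofReal (jb ((Fin.consEquiv (fun _ : Fin (e+1) => ℤ)) pr) ^ (-p)) *
        ENNReal.ofReal ((1+(dotk k ((Fin.consEquiv (fun _ : Fin (e+1) => ℤ)) pr) - c)^2)^(-(1/2:ℝ)))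
      ≤ ENNReal.ofReal (jb pr.2 ^ (-q)) *
        (ENNReal.ofReal ((1+((pr.1:ℝ))^2)^(-(η/2))) *
          ENNReal.ofReal ((1+(k 0 * (pr.1:ℝ) - (c - dotk (fun i => k i.succ) pr.2))^2)^(-(1/2:ℝ)))) := by
    rintro ⟨t, m'⟩
    have hce : (Fin.consEquiv (fun _ : Fin (e+1) => ℤ)) (t, m') = Fin.cons t m' := rfl
    rw [hce]
    set J : ℝ := jb (Fin.cons t m') with hJ
    have hJpos : 0 < J := PA_jb_pos _
    have hJm : jb m' ≤ J := by
      rw [hJ, jb, jb]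
      apply Real.sqrt_le_sqrt
      rw [Fin.sum_univ_succ]
      simp only [Fin.cons_zero, Fin.cons_succ]
      nlinarith [sq_nonneg ((t:ℝ))]
    have hJt : (1:ℝ) + (t:ℝ)^2 ≤ J^2 := by
      rw [hJ, PA_jb_sq, Fin.sum_univ_succ]
      simp only [Fin.cons_zero, Fin.cons_succ]
      have : (0:ℝ) ≤ ∑ i : Fin e, ((m' i : ℝ))^2 := by positivity
      linarith
    have f2 : J ^ (-p) ≤ jb m' ^ (-q) * ((1:ℝ)+(t:ℝ)^2)^(-(η/2)) := by
      have h1 : jb m' ^ q ≤ J ^ q := Real.rpow_le_rpow (PA_jb_pos m').le hJm hq0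
      have h2 : ((1:ℝ)+(t:ℝ)^2)^(η/2) ≤ J ^ η := by
        calc ((1:ℝ)+(t:ℝ)^2)^(η/2) ≤ (J^2) ^ (η/2) :=
              Real.rpow_le_rpow (by positivity) hJt (by positivity)
          _ = J ^ η := by
              rw [← Real.rpow_natCast J 2, ← Real.rpow_mul hJpos.le]
              congr 1
              ring
      have h3 : jb m' ^ q * ((1:ℝ)+(t:ℝ)^2)^(η/2) ≤ J ^ p := by
        calc jb m' ^ q * ((1:ℝ)+(t:ℝ)^2)^(η/2) ≤ J ^ q * J ^ η := by
              apply mul_le_mul h1 h2 (by positivity) (Real.rpow_nonneg hJpos.le _)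
          _ = J ^ p := by rw [← Real.rpow_add hJpos, hqdef]; ring_nf
      calc J ^ (-p) = (J ^ p)⁻¹ := by rw [Real.rpow_neg hJpos.le]
        _ ≤ (jb m' ^ q * ((1:ℝ)+(t:ℝ)^2)^(η/2))⁻¹ := inv_anti₀ (mul_pos (Real.rpow_pos_of_pos (PA_jb_pos m') _) (Real.rpow_pos_of_pos (by positivity) _)) h3
        _ = jb m' ^ (-q) * ((1:ℝ)+(t:ℝ)^2)^(-(η/2)) := by
            rw [mul_inv, Real.rpow_neg (PA_jb_pos m').le, Real.rpow_neg (by positivity)]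
    have f1 : dotk k (Fin.cons t m') - c
        = k 0 * (t:ℝ) - (c - dotk (fun i => k i.succ) m') := by
      rw [PA_dotk_cons]; ring
    rw [f1]
    calc ENNReal.ofReal (J ^ (-p)) *
          ENNReal.ofReal ((1+(k 0 * (t:ℝ) - (c - dotk (fun i => k i.succ) m'))^2)^(-(1/2:ℝ)))
        ≤ ENNReal.ofReal (jb m' ^ (-q) * ((1:ℝ)+(t:ℝ)^2)^(-(η/2))) *
          ENNReal.ofReal ((1+(k 0 * (t:ℝ) - (c - dotk (fun i => k i.succ) m'))^2)^(-(1/2:ℝ))) := by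
          exact mul_le_mul_left (ENNReal.ofReal_le_ofReal f2) _
      _ = _ := by
          rw [ENNReal.ofReal_mul (Real.rpow_nonneg (PA_jb_pos m').le _), mul_assoc]
  refine le_trans (ENNReal.tsum_le_tsum hpt) ?_
  rw [ENNReal.tsum_prod']
  rw [ENNReal.tsum_comm]
  calc ∑' (m' : Freq e) (t : ℤ), ENNReal.ofReal (jb m' ^ (-q)) *
        (ENNReal.ofReal ((1+((t:ℝ))^2)^(-(η/2))) *
          ENNReal.ofReal ((1+(k 0 * (t:ℝ) - (c - dotk (fun i => k i.succ) m'))^2)^(-(1/2:ℝ))))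
      = ∑' (m' : Freq e), ENNReal.ofReal (jb m' ^ (-q)) *
        ∑' t : ℤ, (ENNReal.ofReal ((1+((t:ℝ))^2)^(-(η/2))) *
          ENNReal.ofReal ((1+(k 0 * (t:ℝ) - (c - dotk (fun i => k i.succ) m'))^2)^(-(1/2:ℝ)))) := by
        exact tsum_congr fun m' => ENNReal.tsum_mul_left
    _ ≤ ∑' (m' : Freq e), ENNReal.ofReal (jb m' ^ (-q)) * C₁ := by
        exact ENNReal.tsum_le_tsum fun m' => mul_le_mul_right (hC₁b _) _
    _ = (∑' m' : Freq e, ENNReal.ofReal (jb m' ^ (-q))) * C₁ := ENNReal.tsum_mul_right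

lemma PA_dotk_add (k : Fin d → ℝ) (x y : Freq d) :
    dotk k (x + y) = dotk k x + dotk k y := by
  rw [dotk, dotk, dotk, ← Finset.sum_add_distrib]
  apply Finset.sum_congr rfl
  intro i _
  push_cast [Pi.add_apply]
  ring

lemma PA_dotk_sub (k : Fin d → ℝ) (x y : Freq d) :
    dotk k (x - y) = dotk k x - dotk k y := by
  rw [dotk, dotk, dotk, ← Finset.sum_sub_distrib]
  apply Finset.sum_congr rfl
  intro i _
  push_cast [Pi.sub_apply]
  ring

lemma PA_main (k : Fin d → ℝ) (s : ℝ)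
    (C₀ : ℝ≥0∞) (hC₀ : C₀ ≠ ⊤)
    (hkey : ∀ c : ℝ, ∑' m : Freq d, ENNReal.ofReal (jb m ^ (-(2*s-2))) *
      ENNReal.ofReal ((1+(dotk k m - c)^2)^(-(1/2:ℝ))) ≤ C₀)
    (f u : Coeffs d) :
    ∑' j : Freq d, ENNReal.ofReal ((1 + dotk k j ^2)^((1:ℝ)/2)) *
        (∑' m : Freq d, ENNReal.ofReal ‖f m‖ * ENNReal.ofReal ‖u (j-m)‖)^2
      ≤ (ENNReal.ofReal (Real.sqrt 2) * (C₀ + C₀)) *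
        (∑' m : Freq d, ENNReal.ofReal (jb m ^ (2*s-2) * (1 + dotk k m ^2)^((1:ℝ)/2)) *
          (ENNReal.ofReal ‖f m‖)^2) *
        (∑' n : Freq d, ENNReal.ofReal ((1 + dotk k n ^2)^((1:ℝ)/2)) *
          (ENNReal.ofReal ‖u n‖)^2) := by
  set A : Freq d → ℝ := fun x => (1 + dotk k x^2)^((1:ℝ)/2) with hA
  set Ai : Freq d → ℝ := fun x => (1 + dotk k x^2)^(-((1:ℝ)/2)) with hAi
  have hApos : ∀ x, 0 < A x := fun x => Real.rpow_pos_of_pos (by positivity) _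
  have hAipos : ∀ x, 0 < Ai x := fun x => Real.rpow_pos_of_pos (by positivity) _
  have hAAi : ∀ x, A x * Ai x = 1 := by
    intro x
    rw [hA, hAi]
    simp only
    rw [Real.rpow_neg (by positivity)]
    exact mul_inv_cancel₀ (by positivity)
  set γ : Freq d → Freq d → ℝ :=
    fun j m => jb m ^ (-(2*s-2)) * A j * Ai m * Ai (j-m) with hγ
  set δ : Freq d → Freq d → ℝ :=
    fun j m => jb m ^ (2*s-2) * Ai j * A m * A (j-m) with hδ
  have hγpos : ∀ j m, 0 < γ j m := fun j m => by
    exact mul_pos (mul_pos (mul_pos (Real.rpow_pos_of_pos (PA_jb_pos m) _) (hApos j))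
      (hAipos m)) (hAipos (j-m))
  have hδpos : ∀ j m, 0 < δ j m := fun j m => by
    exact mul_pos (mul_pos (mul_pos (Real.rpow_pos_of_pos (PA_jb_pos m) _) (hAipos j))
      (hApos m)) (hApos (j-m))
  have hjbc : ∀ m : Freq d, jb m ^ (-(2*s-2)) * jb m ^ (2*s-2) = 1 := by
    intro m
    rw [Real.rpow_neg (PA_jb_pos m).le]
    exact inv_mul_cancel₀ (ne_of_gt (Real.rpow_pos_of_pos (PA_jb_pos m) _))
  have hγδ : ∀ j m, γ j m * δ j m = 1 := by
    intro j m
    have e1 := hAAi j; have e2 := hAAi m; have e3 := hAAi (j-m); have e4 := hjbc m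
    rw [hγ, hδ]
    simp only
    linear_combination (A j * Ai j * (A m * Ai m) * (A (j-m) * Ai (j-m))) * e4
      + (A m * Ai m * (A (j-m) * Ai (j-m))) * e1 + (A (j-m) * Ai (j-m)) * e2 + e3
  -- subadditivity of A
  have hAsub : ∀ x y : Freq d, A (x + y) ≤ Real.sqrt 2 * (A x + A y) := by
    intro x y
    have hd := PA_dotk_add k x y
    have hsq : ∀ z : Freq d, A z = Real.sqrt (1 + dotk k z^2) := by
      intro z
      rw [hA]
      simp only
      rw [Real.sqrt_eq_rpow]
    rw [hsq, hsq, hsq, hd]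
    have h1 : 1 + (dotk k x + dotk k y)^2 ≤ 2*((1+dotk k x^2) + (1+dotk k y^2)) := by
      nlinarith [sq_nonneg (dotk k x - dotk k y)]
    calc Real.sqrt (1 + (dotk k x + dotk k y)^2)
        ≤ Real.sqrt (2*((1+dotk k x^2) + (1+dotk k y^2))) := Real.sqrt_le_sqrt h1
      _ = Real.sqrt 2 * Real.sqrt ((1+dotk k x^2) + (1+dotk k y^2)) := by
          rw [Real.sqrt_mul (by norm_num)]
      _ ≤ Real.sqrt 2 * (Real.sqrt (1+dotk k x^2) + Real.sqrt (1+dotk k y^2)) := by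
          apply mul_le_mul_of_nonneg_left
            (PA_sqrt_add _ _ (by positivity) (by positivity)) (Real.sqrt_nonneg 2)
  -- step 2 : uniform bound on ∑ γ
  have hS : ∀ j : Freq d, ∑' m : Freq d, ENNReal.ofReal (γ j m)
      ≤ ENNReal.ofReal (Real.sqrt 2) * (C₀ + C₀) := by
    intro j
    have hpt : ∀ m : Freq d, ENNReal.ofReal (γ j m)
        ≤ ENNReal.ofReal (Real.sqrt 2) * (ENNReal.ofReal (jb m ^ (-(2*s-2)) * Ai (j-m))
          + ENNReal.ofReal (jb m ^ (-(2*s-2)) * Ai m)) := by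
      intro m
      have hAj : A j ≤ Real.sqrt 2 * (A m + A (j-m)) := by
        have := hAsub m (j - m)
        rwa [add_sub_cancel] at this
      have hreal : γ j m ≤ Real.sqrt 2 * ((jb m ^ (-(2*s-2)) * Ai (j-m))
          + (jb m ^ (-(2*s-2)) * Ai m)) := by
        have hstep : γ j m ≤ jb m ^ (-(2*s-2)) * (Real.sqrt 2 * (A m + A (j-m))) * Ai m * Ai (j-m) := by
          rw [hγ]
          simp only
          have h1 : jb m ^ (-(2*s-2)) * A j * Ai m ≤
              jb m ^ (-(2*s-2)) * (Real.sqrt 2 * (A m + A (j-m))) * Ai m := by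
            apply mul_le_mul_of_nonneg_right _ (hAipos m).le
            apply mul_le_mul_of_nonneg_left hAj (Real.rpow_pos_of_pos (PA_jb_pos m) _).le
          exact mul_le_mul_of_nonneg_right h1 (hAipos (j-m)).le
        refine le_trans hstep (le_of_eq ?_)
        have e2 := hAAi m; have e3 := hAAi (j-m)
        linear_combination (Real.sqrt 2 * jb m ^ (-(2*s-2)) * Ai (j-m)) * e2
          + (Real.sqrt 2 * jb m ^ (-(2*s-2)) * Ai m) * e3
      calc ENNReal.ofReal (γ j m) ≤ ENNReal.ofReal (Real.sqrt 2 *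
            ((jb m ^ (-(2*s-2)) * Ai (j-m)) + (jb m ^ (-(2*s-2)) * Ai m))) :=
            ENNReal.ofReal_le_ofReal hreal
        _ = _ := by
            rw [ENNReal.ofReal_mul (Real.sqrt_nonneg 2), ENNReal.ofReal_add
              (mul_nonneg (Real.rpow_nonneg (PA_jb_pos m).le _) (hAipos _).le)
              (mul_nonneg (Real.rpow_nonneg (PA_jb_pos m).le _) (hAipos _).le)]
    refine le_trans (ENNReal.tsum_le_tsum hpt) ?_
    rw [ENNReal.tsum_mul_left]
    apply mul_le_mul_right
    rw [ENNReal.tsum_add]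
    apply add_le_add
    · -- term with Ai (j-m) : use hkey with c = dotk k j
      have hc := hkey (dotk k j)
      refine le_trans (le_of_eq (tsum_congr fun m => ?_)) hc
      rw [ENNReal.ofReal_mul (Real.rpow_nonneg (PA_jb_pos m).le _)]
      congr 2
      rw [hAi]
      simp only
      congr 2
      rw [PA_dotk_sub]
      ring
    · -- term with Ai m : use hkey with c = 0
      have hc := hkey 0
      refine le_trans (le_of_eq (tsum_congr fun m => ?_)) hc
      rw [ENNReal.ofReal_mul (Real.rpow_nonneg (PA_jb_pos m).le _)]
      congr 2
      rw [hAi]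
      simp only
      congr 2
      ring
  -- step 1: Cauchy-Schwarz per j
  have hCS : ∀ j : Freq d,
      (∑' m : Freq d, ENNReal.ofReal ‖f m‖ * ENNReal.ofReal ‖u (j-m)‖)^2
      ≤ (∑' m : Freq d, ENNReal.ofReal (γ j m)) *
        (∑' m : Freq d, ENNReal.ofReal (δ j m) *
          ((ENNReal.ofReal ‖f m‖)^2 * (ENNReal.ofReal ‖u (j-m)‖)^2)) := by
    intro j
    set a : Freq d → ℝ≥0∞ := fun m => ENNReal.ofReal (Real.sqrt (γ j m)) with ha
    set b : Freq d → ℝ≥0∞ := fun m =>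
      ENNReal.ofReal (Real.sqrt (δ j m)) *
        (ENNReal.ofReal ‖f m‖ * ENNReal.ofReal ‖u (j-m)‖) with hb
    have hab : ∀ m, ENNReal.ofReal ‖f m‖ * ENNReal.ofReal ‖u (j-m)‖ = a m * b m := by
      intro m
      rw [ha, hb]
      simp only
      rw [← mul_assoc, ← ENNReal.ofReal_mul (Real.sqrt_nonneg _),
        ← Real.sqrt_mul (hγpos j m).le, hγδ j m, Real.sqrt_one, ENNReal.ofReal_one, one_mul]
    have ha2 : ∀ m, a m ^ 2 = ENNReal.ofReal (γ j m) := by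
      intro m
      rw [ha]
      simp only
      rw [← ENNReal.ofReal_pow (Real.sqrt_nonneg _), Real.sq_sqrt (hγpos j m).le]
    have hb2 : ∀ m, b m ^ 2 = ENNReal.ofReal (δ j m) *
        ((ENNReal.ofReal ‖f m‖)^2 * (ENNReal.ofReal ‖u (j-m)‖)^2) := by
      intro m
      rw [hb]
      simp only
      rw [mul_pow, mul_pow, ← ENNReal.ofReal_pow (Real.sqrt_nonneg _),
        Real.sq_sqrt (hδpos j m).le]
    calc (∑' m : Freq d, ENNReal.ofReal ‖f m‖ * ENNReal.ofReal ‖u (j-m)‖)^2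
        = (∑' m : Freq d, a m * b m)^2 := by rw [tsum_congr hab]
      _ ≤ (∑' m : Freq d, a m ^2) * (∑' m : Freq d, b m ^2) := PA_cs a b
      _ = _ := by rw [tsum_congr ha2, tsum_congr hb2]
  -- step 3: combine
  set K : ℝ≥0∞ := ENNReal.ofReal (Real.sqrt 2) * (C₀ + C₀) with hK
  have hAδ : ∀ j m : Freq d, ENNReal.ofReal (A j) * ENNReal.ofReal (δ j m)
      = ENNReal.ofReal (jb m ^ (2*s-2) * A m) * ENNReal.ofReal (A (j-m)) := by
    intro j m
    rw [← ENNReal.ofReal_mul (hApos j).le, ← ENNReal.ofReal_mul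
      (mul_nonneg (Real.rpow_nonneg (PA_jb_pos m).le _) (hApos m).le)]
    congr 1
    have e1 := hAAi j
    rw [hδ]
    simp only
    linear_combination (jb m ^(2*s-2) * A m * A (j-m)) * e1
  have hTj : ∀ j : Freq d, ENNReal.ofReal (A j) * (∑' m : Freq d, ENNReal.ofReal (δ j m) *
        ((ENNReal.ofReal ‖f m‖)^2 * (ENNReal.ofReal ‖u (j-m)‖)^2))
      = ∑' m : Freq d, (ENNReal.ofReal (jb m ^(2*s-2) * A m) * (ENNReal.ofReal ‖f m‖)^2) *
        (ENNReal.ofReal (A (j-m)) * (ENNReal.ofReal ‖u (j-m)‖)^2) := by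
    intro j
    rw [← ENNReal.tsum_mul_left]
    apply tsum_congr; intro m
    calc ENNReal.ofReal (A j) * (ENNReal.ofReal (δ j m) *
          ((ENNReal.ofReal ‖f m‖)^2 * (ENNReal.ofReal ‖u (j-m)‖)^2))
        = (ENNReal.ofReal (A j) * ENNReal.ofReal (δ j m)) *
          ((ENNReal.ofReal ‖f m‖)^2 * (ENNReal.ofReal ‖u (j-m)‖)^2) := by ring
      _ = _ := by rw [hAδ j m]; ring
  calc ∑' j : Freq d, ENNReal.ofReal ((1 + dotk k j ^2)^((1:ℝ)/2)) *
        (∑' m : Freq d, ENNReal.ofReal ‖f m‖ * ENNReal.ofReal ‖u (j-m)‖)^2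
      ≤ ∑' j : Freq d, ENNReal.ofReal (A j) *
          ((∑' m : Freq d, ENNReal.ofReal (γ j m)) * (∑' m : Freq d, ENNReal.ofReal (δ j m) *
            ((ENNReal.ofReal ‖f m‖)^2 * (ENNReal.ofReal ‖u (j-m)‖)^2))) :=
        ENNReal.tsum_le_tsum (fun j => mul_le_mul_right (hCS j) _)
    _ ≤ ∑' j : Freq d, ENNReal.ofReal (A j) *
          (K * (∑' m : Freq d, ENNReal.ofReal (δ j m) *
            ((ENNReal.ofReal ‖f m‖)^2 * (ENNReal.ofReal ‖u (j-m)‖)^2))) :=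
        ENNReal.tsum_le_tsum (fun j =>
          mul_le_mul_right (mul_le_mul_left (hS j) _) _)
    _ = K * ∑' j : Freq d, ENNReal.ofReal (A j) *
          (∑' m : Freq d, ENNReal.ofReal (δ j m) *
            ((ENNReal.ofReal ‖f m‖)^2 * (ENNReal.ofReal ‖u (j-m)‖)^2)) := by
        rw [← ENNReal.tsum_mul_left]
        apply tsum_congr; intro j
        ring
    _ = K * ∑' m : Freq d, (ENNReal.ofReal (jb m ^(2*s-2) * A m) * (ENNReal.ofReal ‖f m‖)^2) *
          (∑' j : Freq d, ENNReal.ofReal (A (j-m)) * (ENNReal.ofReal ‖u (j-m)‖)^2) := by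
        congr 1
        rw [tsum_congr hTj, ENNReal.tsum_comm]
        apply tsum_congr; intro m
        rw [ENNReal.tsum_mul_left]
    _ = (K * (∑' m : Freq d, ENNReal.ofReal (jb m ^ (2*s-2) * (1 + dotk k m ^2)^((1:ℝ)/2)) *
          (ENNReal.ofReal ‖f m‖)^2)) * (∑' n : Freq d, ENNReal.ofReal ((1 + dotk k n ^2)^((1:ℝ)/2)) *
          (ENNReal.ofReal ‖u n‖)^2) := by
        have hre : ∀ m : Freq d, (∑' j : Freq d, ENNReal.ofReal (A (j-m)) *
            (ENNReal.ofReal ‖u (j-m)‖)^2)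
            = ∑' n : Freq d, ENNReal.ofReal (A n) * (ENNReal.ofReal ‖u n‖)^2 := by
          intro m
          have h := (Equiv.subRight m).tsum_eq
            (fun n : Freq d => ENNReal.ofReal (A n) * (ENNReal.ofReal ‖u n‖)^2)
          simp only [Equiv.subRight_apply] at h
          exact h
        have h2 : (∑' (m : Freq d), ENNReal.ofReal (jb m ^ (2*s-2) * A m) *
              ENNReal.ofReal ‖f m‖ ^ 2 *
              ∑' (j : Freq d), ENNReal.ofReal (A (j - m)) * ENNReal.ofReal ‖u (j - m)‖ ^ 2)
            = (∑' (m : Freq d), ENNReal.ofReal (jb m ^ (2*s-2) * A m) *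
              ENNReal.ofReal ‖f m‖ ^ 2) *
              ∑' (n : Freq d), ENNReal.ofReal (A n) * ENNReal.ofReal ‖u n‖ ^ 2 := by
          rw [← ENNReal.tsum_mul_right]
          exact tsum_congr fun m => by rw [hre m]
        rw [h2]
        ring

end PAux

/-- **Lemma 5.3, bounds (prod1) and (prod3) (Product estimate, anisotropic version).**
Let `s > (d+1)/2`. There is a constant `C = C(d,s,k)` such that for every
`f ∈ H^{s-1,1/2}(𝕋^d)` and every `u ∈ H^{0,1/2}(𝕋^d)`, the product `fu` lies in
`H^{0,1/2}(𝕋^d)` and `‖fu‖_{H^{0,1/2}} ≤ C ‖f‖_{H^{s-1,1/2}} ‖u‖_{H^{0,1/2}}`.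
In particular `‖fu‖_{H^{0,1/2}} ≤ C' ‖f‖_{H^{s-1/2}} ‖u‖_{H^{0,1/2}}` for all
`f ∈ H^{s-1/2}(𝕋^d)`. -/
theorem product_aniso
    (d : ℕ) (hd : 1 ≤ d) (k : Fin d → ℝ) (hk : Indep k)
    (s : ℝ) (hs : ((d : ℝ) + 1) / 2 < s) :
    (∃ C : ℝ, 0 < C ∧
      ∀ f u : Coeffs d, MemSob k (s - 1) (1/2) f → MemSob k 0 (1/2) u →
        MemSob k 0 (1/2) (cmul f u) ∧
        sobNorm k 0 (1/2) (cmul f u)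
          ≤ C * sobNorm k (s - 1) (1/2) f * sobNorm k 0 (1/2) u) ∧
    (∃ C' : ℝ, 0 < C' ∧
      ∀ f u : Coeffs d, MemHs (s - 1/2) f → MemSob k 0 (1/2) u →
        MemSob k 0 (1/2) (cmul f u) ∧
        sobNorm k 0 (1/2) (cmul f u)
          ≤ C' * HsNorm (s - 1/2) f * sobNorm k 0 (1/2) u) := by
  obtain ⟨e, rfl⟩ : ∃ e, d = e + 1 := ⟨d - 1, (Nat.succ_pred_eq_of_pos hd).symm⟩
  -- k 0 ≠ 0
  have hk0 : k 0 ≠ 0 := by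
    intro h0
    have h1 : dotk k (Pi.single 0 1) = 0 := by
      rw [dotk]
      rw [Finset.sum_eq_single 0]
      · simp [h0]
      · intro i _ hi
        simp [Pi.single_apply, hi]
      · simp
    have h2 := hk _ h1
    have h3 := congrFun h2 0
    simp [Pi.single_apply] at h3
  have hp : ((e:ℝ)) < 2*s - 2 := by
    push_cast at hs
    linarith
  obtain ⟨C₀, hC₀, hkey0⟩ := PA_key e k hk0 hp
  have hkey : ∀ c : ℝ, ∑' m : Freq (e+1), ENNReal.ofReal (jb m ^ (-(2*s-2))) *
      ENNReal.ofReal ((1+(dotk k m - c)^2)^(-(1/2:ℝ))) ≤ C₀ := hkey0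
  set K : ENNReal := ENNReal.ofReal (Real.sqrt 2) * (C₀ + C₀) with hK
  have hKne : K ≠ ⊤ :=
    ENNReal.mul_ne_top ENNReal.ofReal_ne_top (ENNReal.add_ne_top.mpr ⟨hC₀, hC₀⟩)
  set C : ℝ := max 1 (Real.sqrt K.toReal) with hCdef
  have hCpos : (0:ℝ) < C := lt_of_lt_of_le one_pos (le_max_left _ _)
  -- weight identities
  have hwt0 : ∀ j : Freq (e+1), wt k 0 (1/2) j = (1 + dotk k j ^2)^((1:ℝ)/2) := by
    intro j
    rw [wt, mul_zero, Real.rpow_zero, one_mul]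
  have hwtf : ∀ m : Freq (e+1),
      wt k (s-1) (1/2) m = jb m ^ (2*s-2) * (1 + dotk k m ^2)^((1:ℝ)/2) := by
    intro m
    rw [wt, show 2*(s-1) = 2*s-2 by ring]
  have hwt0nn : ∀ j : Freq (e+1), 0 ≤ wt k 0 (1/2) j := by
    intro j
    rw [hwt0]; positivity
  have hwtfnn : ∀ m : Freq (e+1), 0 ≤ wt k (s-1) (1/2) m := by
    intro m
    rw [hwtf]
    exact mul_nonneg (Real.rpow_nonneg (PA_jb_pos m).le _) (by positivity)
  -- the main statement, part 1
  have main : ∀ f u : Coeffs (e+1), MemSob k (s - 1) (1/2) f → MemSob k 0 (1/2) u →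
      MemSob k 0 (1/2) (cmul f u) ∧
      sobNorm k 0 (1/2) (cmul f u)
        ≤ C * sobNorm k (s - 1) (1/2) f * sobNorm k 0 (1/2) u := by
    intro f u hf hu
    have hfnn : ∀ m, 0 ≤ wt k (s-1) (1/2) m * ‖f m‖^2 :=
      fun m => mul_nonneg (hwtfnn m) (by positivity)
    have hunn : ∀ n, 0 ≤ wt k 0 (1/2) n * ‖u n‖^2 :=
      fun n => mul_nonneg (hwt0nn n) (by positivity)
    -- identify the ENNReal sums with ofReal of the real sums
    have hSf : (∑' m : Freq (e+1), ENNReal.ofReal (jb m ^ (2*s-2) * (1 + dotk k m ^2)^((1:ℝ)/2)) *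
        (ENNReal.ofReal ‖f m‖)^2) = ENNReal.ofReal (∑' m : Freq (e+1), wt k (s-1) (1/2) m * ‖f m‖^2) := by
      rw [ENNReal.ofReal_tsum_of_nonneg hfnn hf]
      apply tsum_congr; intro m
      rw [← ENNReal.ofReal_pow (norm_nonneg _), ← ENNReal.ofReal_mul
        (by rw [← hwtf]; exact hwtfnn m), hwtf]
    have hSu : (∑' n : Freq (e+1), ENNReal.ofReal ((1 + dotk k n ^2)^((1:ℝ)/2)) *
        (ENNReal.ofReal ‖u n‖)^2) = ENNReal.ofReal (∑' n : Freq (e+1), wt k 0 (1/2) n * ‖u n‖^2) := by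
      rw [ENNReal.ofReal_tsum_of_nonneg hunn hu]
      apply tsum_congr; intro n
      rw [← ENNReal.ofReal_pow (norm_nonneg _), ← ENNReal.ofReal_mul
        (by rw [← hwt0]; exact hwt0nn n), hwt0]
    -- pointwise domination of the product coefficients
    have hpt : ∀ j : Freq (e+1), ENNReal.ofReal (wt k 0 (1/2) j * ‖cmul f u j‖^2)
        ≤ ENNReal.ofReal ((1 + dotk k j ^2)^((1:ℝ)/2)) *
          (∑' m : Freq (e+1), ENNReal.ofReal ‖f m‖ * ENNReal.ofReal ‖u (j-m)‖)^2 := by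
      intro j
      rw [ENNReal.ofReal_mul (hwt0nn j), hwt0, ENNReal.ofReal_pow (norm_nonneg _)]
      apply mul_le_mul_right
      apply pow_le_pow_left' _ 2
      -- ‖cmul f u j‖ ≤ ∑' ...
      by_cases hP : (∑' m : Freq (e+1), ENNReal.ofReal ‖f m‖ * ENNReal.ofReal ‖u (j-m)‖) = ⊤
      · rw [hP]; exact le_top
      · have hco : ∀ m : Freq (e+1), ENNReal.ofReal ‖f m‖ * ENNReal.ofReal ‖u (j-m)‖
            = ((‖f m * u (j-m)‖₊ : NNReal) : ENNReal) := by
          intro m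
          rw [ofReal_norm, ofReal_norm, enorm_eq_nnnorm, enorm_eq_nnnorm, nnnorm_mul,
            ENNReal.coe_mul]
        have hP' : (∑' m : Freq (e+1), ((‖f m * u (j-m)‖₊ : NNReal) : ENNReal)) ≠ ⊤ := by
          rw [← tsum_congr hco]; exact hP
        have hnn : Summable (fun m : Freq (e+1) => ‖f m * u (j-m)‖₊) :=
          ENNReal.tsum_coe_ne_top_iff_summable.mp hP'
        have hnorm : Summable (fun m : Freq (e+1) => ‖f m * u (j-m)‖) := by
          have := NNReal.summable_coe.mpr hnn
          refine this.congr fun m => ?_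
          simp [coe_nnnorm]
        calc ENNReal.ofReal ‖cmul f u j‖
            ≤ ENNReal.ofReal (∑' m : Freq (e+1), ‖f m * u (j-m)‖) := by
              apply ENNReal.ofReal_le_ofReal
              exact norm_tsum_le_tsum_norm hnorm
          _ = ∑' m : Freq (e+1), ENNReal.ofReal ‖f m * u (j-m)‖ :=
              ENNReal.ofReal_tsum_of_nonneg (fun m => norm_nonneg _) hnorm
          _ = ∑' m : Freq (e+1), ENNReal.ofReal ‖f m‖ * ENNReal.ofReal ‖u (j-m)‖ := by
              apply tsum_congr; intro m
              rw [norm_mul, ENNReal.ofReal_mul (norm_nonneg _)]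
    -- chain of inequalities
    have hchain : (∑' j : Freq (e+1), ENNReal.ofReal (wt k 0 (1/2) j * ‖cmul f u j‖^2))
        ≤ K * ENNReal.ofReal (∑' m : Freq (e+1), wt k (s-1) (1/2) m * ‖f m‖^2) *
          ENNReal.ofReal (∑' n : Freq (e+1), wt k 0 (1/2) n * ‖u n‖^2) := by
      calc (∑' j : Freq (e+1), ENNReal.ofReal (wt k 0 (1/2) j * ‖cmul f u j‖^2))
          ≤ ∑' j : Freq (e+1), ENNReal.ofReal ((1 + dotk k j ^2)^((1:ℝ)/2)) *
            (∑' m : Freq (e+1), ENNReal.ofReal ‖f m‖ * ENNReal.ofReal ‖u (j-m)‖)^2 :=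
            ENNReal.tsum_le_tsum hpt
        _ ≤ K * (∑' m : Freq (e+1), ENNReal.ofReal (jb m ^ (2*s-2) * (1 + dotk k m ^2)^((1:ℝ)/2)) *
              (ENNReal.ofReal ‖f m‖)^2) *
            (∑' n : Freq (e+1), ENNReal.ofReal ((1 + dotk k n ^2)^((1:ℝ)/2)) *
              (ENNReal.ofReal ‖u n‖)^2) := PA_main k s C₀ hC₀ hkey f u
        _ = _ := by rw [hSf, hSu]
    have hRne : K * ENNReal.ofReal (∑' m : Freq (e+1), wt k (s-1) (1/2) m * ‖f m‖^2) *
        ENNReal.ofReal (∑' n : Freq (e+1), wt k 0 (1/2) n * ‖u n‖^2) ≠ ⊤ :=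
      ENNReal.mul_ne_top (ENNReal.mul_ne_top hKne ENNReal.ofReal_ne_top) ENNReal.ofReal_ne_top
    have hLne : (∑' j : Freq (e+1), ENNReal.ofReal (wt k 0 (1/2) j * ‖cmul f u j‖^2)) ≠ ⊤ :=
      ne_top_of_le_ne_top hRne hchain
    -- summability of the product
    have hcnn : ∀ j, 0 ≤ wt k 0 (1/2) j * ‖cmul f u j‖^2 :=
      fun j => mul_nonneg (hwt0nn j) (by positivity)
    have hmem : MemSob k 0 (1/2) (cmul f u) := by
      have h1 : Summable (fun j : Freq (e+1) => (wt k 0 (1/2) j * ‖cmul f u j‖^2).toNNReal) := by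
        apply ENNReal.tsum_coe_ne_top_iff_summable.mp
        convert hLne using 2
        rfl
      have h2 := NNReal.summable_coe.mpr h1
      refine h2.congr fun j => ?_
      rw [Real.coe_toNNReal _ (hcnn j)]
    refine ⟨hmem, ?_⟩
    -- numeric bound
    have hsum_eq : (∑' j : Freq (e+1), wt k 0 (1/2) j * ‖cmul f u j‖^2)
        = (∑' j : Freq (e+1), ENNReal.ofReal (wt k 0 (1/2) j * ‖cmul f u j‖^2)).toReal := by
      rw [← ENNReal.ofReal_tsum_of_nonneg hcnn hmem, ENNReal.toReal_ofReal
        (tsum_nonneg hcnn)]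
    have hbound : (∑' j : Freq (e+1), wt k 0 (1/2) j * ‖cmul f u j‖^2)
        ≤ K.toReal * ((∑' m : Freq (e+1), wt k (s-1) (1/2) m * ‖f m‖^2) *
          (∑' n : Freq (e+1), wt k 0 (1/2) n * ‖u n‖^2)) := by
      rw [hsum_eq]
      calc (∑' j : Freq (e+1), ENNReal.ofReal (wt k 0 (1/2) j * ‖cmul f u j‖^2)).toReal
          ≤ (K * ENNReal.ofReal (∑' m : Freq (e+1), wt k (s-1) (1/2) m * ‖f m‖^2) *
            ENNReal.ofReal (∑' n : Freq (e+1), wt k 0 (1/2) n * ‖u n‖^2)).toReal :=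
            ENNReal.toReal_mono hRne hchain
        _ = K.toReal * ((∑' m : Freq (e+1), wt k (s-1) (1/2) m * ‖f m‖^2) *
            (∑' n : Freq (e+1), wt k 0 (1/2) n * ‖u n‖^2)) := by
            rw [ENNReal.toReal_mul, ENNReal.toReal_mul, ENNReal.toReal_ofReal
              (tsum_nonneg hfnn), ENNReal.toReal_ofReal (tsum_nonneg hunn)]
            ring
    rw [sobNorm, sobNorm, sobNorm]
    calc Real.sqrt (∑' j : Freq (e+1), wt k 0 (1/2) j * ‖cmul f u j‖^2)
        ≤ Real.sqrt (K.toReal * ((∑' m : Freq (e+1), wt k (s-1) (1/2) m * ‖f m‖^2) *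
          (∑' n : Freq (e+1), wt k 0 (1/2) n * ‖u n‖^2))) := Real.sqrt_le_sqrt hbound
      _ = Real.sqrt K.toReal * (Real.sqrt (∑' m : Freq (e+1), wt k (s-1) (1/2) m * ‖f m‖^2) *
          Real.sqrt (∑' n : Freq (e+1), wt k 0 (1/2) n * ‖u n‖^2)) := by
          rw [Real.sqrt_mul ENNReal.toReal_nonneg, Real.sqrt_mul (tsum_nonneg hfnn)]
      _ ≤ C * Real.sqrt (∑' m : Freq (e+1), wt k (s-1) (1/2) m * ‖f m‖^2) *
          Real.sqrt (∑' n : Freq (e+1), wt k 0 (1/2) n * ‖u n‖^2) := by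
          rw [mul_assoc]
          apply mul_le_mul_of_nonneg_right (le_max_right _ _)
          positivity
  refine ⟨⟨C, hCpos, main⟩, ?_⟩
  -- part 2
  set M : ℝ := max 1 (∑ i, (k i)^2) with hM
  have hM1 : (1:ℝ) ≤ M := le_max_left _ _
  have hMp : (0:ℝ) < M := lt_of_lt_of_le one_pos hM1
  have hcomp : ∀ m : Freq (e+1), wt k (s-1) (1/2) m
      ≤ Real.sqrt M * (jb m ^ (2*(s-1/2)) ) := by
    intro m
    have hcs : (dotk k m)^2 ≤ (∑ i, ((m i:ℝ))^2) * (∑ i, (k i)^2) := by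
      rw [dotk]
      exact Finset.sum_mul_sq_le_sq_mul_sq _ _ _
    have h2 : (∑ i, ((m i:ℝ))^2) * (∑ i, (k i)^2) ≤ (∑ i, ((m i:ℝ))^2) * M :=
      mul_le_mul_of_nonneg_left (le_max_right _ _) (by positivity)
    have h1 : 1 + dotk k m ^2 ≤ M * jb m ^2 := by
      rw [PA_jb_sq]
      have h0 : (0:ℝ) ≤ ∑ i, ((m i:ℝ))^2 := by positivity
      nlinarith
    have h3 : (1 + dotk k m^2)^((1:ℝ)/2) ≤ Real.sqrt M * jb m := by
      rw [show ((1:ℝ)/2) = 1/(2:ℝ) by norm_num, ← Real.sqrt_eq_rpow]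
      calc Real.sqrt (1 + dotk k m^2) ≤ Real.sqrt (M * jb m^2) := Real.sqrt_le_sqrt h1
        _ = Real.sqrt M * jb m := by
            rw [Real.sqrt_mul hMp.le, Real.sqrt_sq (PA_jb_pos m).le]
    rw [hwtf, show 2*(s-1/2) = (2*s-2) + 1 by ring, Real.rpow_add (PA_jb_pos m),
      Real.rpow_one]
    calc jb m ^ (2*s-2) * (1 + dotk k m^2)^((1:ℝ)/2)
        ≤ jb m ^(2*s-2) * (Real.sqrt M * jb m) :=
          mul_le_mul_of_nonneg_left h3 (Real.rpow_nonneg (PA_jb_pos m).le _)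
      _ = Real.sqrt M * (jb m ^ (2*s-2) * jb m) := by ring
  -- conclusion of part 2
  have hCM : (0:ℝ) < C * Real.sqrt (Real.sqrt M) :=
    mul_pos hCpos (Real.sqrt_pos.mpr (Real.sqrt_pos.mpr hMp))
  refine ⟨C * Real.sqrt (Real.sqrt M), hCM, fun f u hf hu => ?_⟩
  have hfcomp : ∀ m : Freq (e+1), wt k (s-1) (1/2) m * ‖f m‖^2
      ≤ Real.sqrt M * (jb m ^ (2*(s-1/2)) * ‖f m‖^2) := by
    intro m
    have := mul_le_mul_of_nonneg_right (hcomp m) (sq_nonneg ‖f m‖)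
    calc wt k (s-1) (1/2) m * ‖f m‖^2 ≤ (Real.sqrt M * jb m ^ (2*(s-1/2))) * ‖f m‖^2 := this
      _ = Real.sqrt M * (jb m ^ (2*(s-1/2)) * ‖f m‖^2) := by ring
  have hf' : MemSob k (s-1) (1/2) f :=
    Summable.of_nonneg_of_le (fun m => mul_nonneg (hwtfnn m) (by positivity)) hfcomp
      (hf.mul_left _)
  obtain ⟨h1m, h2m⟩ := main f u hf' hu
  refine ⟨h1m, le_trans h2m ?_⟩
  have hNf : sobNorm k (s-1) (1/2) f ≤ Real.sqrt (Real.sqrt M) * HsNorm (s-1/2) f := by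
    rw [sobNorm, HsNorm]
    have hsum_le : (∑' m : Freq (e+1), wt k (s-1) (1/2) m * ‖f m‖^2)
        ≤ Real.sqrt M * ∑' m : Freq (e+1), jb m ^ (2*(s-1/2)) * ‖f m‖^2 := by
      calc (∑' m : Freq (e+1), wt k (s-1) (1/2) m * ‖f m‖^2)
          ≤ ∑' m : Freq (e+1), Real.sqrt M * (jb m ^ (2*(s-1/2)) * ‖f m‖^2) :=
            Summable.tsum_le_tsum hfcomp hf' (hf.mul_left _)
        _ = Real.sqrt M * ∑' m : Freq (e+1), jb m ^ (2*(s-1/2)) * ‖f m‖^2 := tsum_mul_left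
    calc Real.sqrt (∑' m : Freq (e+1), wt k (s-1) (1/2) m * ‖f m‖^2)
        ≤ Real.sqrt (Real.sqrt M * ∑' m : Freq (e+1), jb m ^ (2*(s-1/2)) * ‖f m‖^2) :=
          Real.sqrt_le_sqrt hsum_le
      _ = Real.sqrt (Real.sqrt M) * Real.sqrt (∑' m : Freq (e+1), jb m ^ (2*(s-1/2)) * ‖f m‖^2) :=
          Real.sqrt_mul (Real.sqrt_nonneg M) _
  have hNu : (0:ℝ) ≤ sobNorm k 0 (1/2) u := by rw [sobNorm]; exact Real.sqrt_nonneg _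
  calc C * sobNorm k (s-1) (1/2) f * sobNorm k 0 (1/2) u
      ≤ C * (Real.sqrt (Real.sqrt M) * HsNorm (s-1/2) f) * sobNorm k 0 (1/2) u := by
        apply mul_le_mul_of_nonneg_right (mul_le_mul_of_nonneg_left hNf hCpos.le) hNu
    _ = (C * Real.sqrt (Real.sqrt M)) * HsNorm (s-1/2) f * sobNorm k 0 (1/2) u := by ring

end
end

section
/- Bound for a in terms of A (Lemma 6.3(ii)): Let s > (d+1)/2. There is a constant C, depending on d, s and k, such that for every holomorphic R ∈ H^{s−1/2,1/2}(𝕋^d), the function a := i(P̄[conj(R)·∂_α R] − P[R·∂_α conj(R)]) satisfies ‖a‖_{H^{s−1/2}} ≤ C ‖R‖²_{H^{s−1/2,1/2}}. -/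
noncomputable section
open scoped BigOperators
open Filter

variable {d : ℕ}

namespace Aux

variable {d : ℕ}

lemma sumsq_nonneg (j : Freq d) : 0 ≤ ∑ i, ((j i : ℝ)) ^ 2 :=
  Finset.sum_nonneg fun i _ => sq_nonneg _

lemma jb_sq (j : Freq d) : jb j ^ 2 = 1 + ∑ i, ((j i : ℝ)) ^ 2 := by
  have h : (0:ℝ) ≤ 1 + ∑ i, ((j i : ℝ)) ^ 2 := by nlinarith [sumsq_nonneg j]
  rw [jb, Real.sq_sqrt h]

lemma one_le_jb (j : Freq d) : 1 ≤ jb j := by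
  have h := Real.sqrt_le_sqrt (show (1:ℝ) ≤ 1 + ∑ i, ((j i : ℝ)) ^ 2 by nlinarith [sumsq_nonneg j])
  rwa [Real.sqrt_one] at h

lemma jb_pos (j : Freq d) : 0 < jb j := lt_of_lt_of_le one_pos (one_le_jb j)

lemma jb_nonneg (j : Freq d) : 0 ≤ jb j := (jb_pos j).le

lemma jb_neg (j : Freq d) : jb (-j) = jb j := by
  rw [jb, jb]
  congr 1
  congr 1
  apply Finset.sum_congr rfl
  intro i _
  rw [Pi.neg_apply]
  push_cast
  ring

lemma jb_add (m n : Freq d) : jb (m + n) ≤ jb m + jb n := by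
  set A := ∑ i, ((m i : ℝ)) ^ 2 with hA
  set C := ∑ i, ((n i : ℝ)) ^ 2 with hC
  set B := ∑ i, ((m i : ℝ)) * ((n i : ℝ)) with hB
  have hsum : ∑ i, (((m + n) i : ℝ)) ^ 2 = A + 2 * B + C := by
    have hterm : ∀ i : Fin d, (((m + n) i : ℝ)) ^ 2
        = ((m i : ℝ)) ^ 2 + 2 * (((m i : ℝ)) * ((n i : ℝ))) + ((n i : ℝ)) ^ 2 := by
      intro i; rw [Pi.add_apply]; push_cast; ring
    rw [hA, hC, hB, Finset.mul_sum, ← Finset.sum_add_distrib, ← Finset.sum_add_distrib]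
    exact Finset.sum_congr rfl fun i _ => hterm i
  have hcs : B ^ 2 ≤ A * C := by
    simpa [hA, hB, hC] using Finset.sum_mul_sq_le_sq_mul_sq Finset.univ
      (fun i => ((m i : ℝ))) (fun i => ((n i : ℝ)))
  have hA0 : 0 ≤ A := sumsq_nonneg m
  have hC0 : 0 ≤ C := sumsq_nonneg n
  have hBle : B ≤ jb m * jb n := by
    have h1 : B ≤ Real.sqrt (A * C) := by
      have := Real.sqrt_le_sqrt hcs
      rw [Real.sqrt_sq_eq_abs] at this
      exact le_trans (le_abs_self B) this
    have h2 : Real.sqrt (A * C) ≤ jb m * jb n := by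
      rw [Real.sqrt_mul hA0, jb, jb]
      apply mul_le_mul (Real.sqrt_le_sqrt (by linarith)) (Real.sqrt_le_sqrt (by linarith))
        (Real.sqrt_nonneg _) (Real.sqrt_nonneg _)
    linarith
  have key : 1 + (A + 2 * B + C) ≤ (jb m + jb n) ^ 2 := by
    nlinarith [jb_sq m, jb_sq n, jb_nonneg m, jb_nonneg n]
  calc jb (m + n) = Real.sqrt (1 + (A + 2 * B + C)) := by rw [jb, hsum]
    _ ≤ Real.sqrt ((jb m + jb n) ^ 2) := Real.sqrt_le_sqrt key
    _ = jb m + jb n := Real.sqrt_sq (add_nonneg (jb_nonneg m) (jb_nonneg n))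

lemma rpow_two_mul {x : ℝ} (hx : 0 < x) (a : ℝ) : (x ^ a) ^ 2 = x ^ (2 * a) := by
  rw [sq, ← Real.rpow_add hx]
  ring_nf

lemma jb_rpow_triangle {σ : ℝ} (hσ : 0 ≤ σ) (m n : Freq d) :
    jb (m + n) ^ σ ≤ 2 ^ σ * (jb m ^ σ + jb n ^ σ) := by
  rcases le_total (jb m) (jb n) with h | h
  · have h1 : jb (m + n) ≤ 2 * jb n := by have := jb_add m n; linarith
    calc jb (m + n) ^ σ ≤ (2 * jb n) ^ σ := Real.rpow_le_rpow (jb_nonneg _) h1 hσ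
      _ = 2 ^ σ * jb n ^ σ := Real.mul_rpow (by norm_num) (jb_nonneg n)
      _ ≤ 2 ^ σ * (jb m ^ σ + jb n ^ σ) := by
          have : (0:ℝ) ≤ jb m ^ σ := Real.rpow_nonneg (jb_nonneg m) σ
          have h2 : (0:ℝ) ≤ (2:ℝ) ^ σ := Real.rpow_nonneg (by norm_num) σ
          nlinarith
  · have h1 : jb (m + n) ≤ 2 * jb m := by have := jb_add m n; linarith
    calc jb (m + n) ^ σ ≤ (2 * jb m) ^ σ := Real.rpow_le_rpow (jb_nonneg _) h1 hσ
      _ = 2 ^ σ * jb m ^ σ := Real.mul_rpow (by norm_num) (jb_nonneg m)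
      _ ≤ 2 ^ σ * (jb m ^ σ + jb n ^ σ) := by
          have : (0:ℝ) ≤ jb n ^ σ := Real.rpow_nonneg (jb_nonneg n) σ
          have h2 : (0:ℝ) ≤ (2:ℝ) ^ σ := Real.rpow_nonneg (by norm_num) σ
          nlinarith

lemma tsum_cs {ι : Type*} (f g : ι → ℝ) (hf0 : ∀ i, 0 ≤ f i) (hg0 : ∀ i, 0 ≤ g i)
    (hf : Summable fun i => f i ^ 2) (hg : Summable fun i => g i ^ 2) :
    Summable (fun i => f i * g i) ∧
      ∑' i, f i * g i ≤ Real.sqrt (∑' i, f i ^ 2) * Real.sqrt (∑' i, g i ^ 2) := by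
  have hs : Summable (fun i => f i * g i) := by
    apply Summable.of_nonneg_of_le (fun i => mul_nonneg (hf0 i) (hg0 i))
      (fun i => ?_) ((hf.add hg).mul_left (1/2 : ℝ))
    nlinarith [sq_nonneg (f i - g i)]
  refine ⟨hs, Summable.tsum_le_of_sum_le hs fun F => ?_⟩
  have h1 : (∑ i ∈ F, f i * g i) ^ 2 ≤ (∑ i ∈ F, f i ^ 2) * ∑ i ∈ F, g i ^ 2 :=
    Finset.sum_mul_sq_le_sq_mul_sq F f g
  have h2 : ∑ i ∈ F, f i ^ 2 ≤ ∑' i, f i ^ 2 := Summable.sum_le_tsum F (fun i _ => sq_nonneg _) hf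
  have h3 : ∑ i ∈ F, g i ^ 2 ≤ ∑' i, g i ^ 2 := Summable.sum_le_tsum F (fun i _ => sq_nonneg _) hg
  have hFnn : 0 ≤ ∑ i ∈ F, f i * g i :=
    Finset.sum_nonneg fun i _ => mul_nonneg (hf0 i) (hg0 i)
  calc ∑ i ∈ F, f i * g i = Real.sqrt ((∑ i ∈ F, f i * g i) ^ 2) := (Real.sqrt_sq hFnn).symm
    _ ≤ Real.sqrt ((∑' i, f i ^ 2) * ∑' i, g i ^ 2) := by
        apply Real.sqrt_le_sqrt
        refine le_trans h1 (mul_le_mul h2 h3 (Finset.sum_nonneg fun i _ => sq_nonneg _)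
          (tsum_nonneg fun i => sq_nonneg _))
    _ = Real.sqrt (∑' i, f i ^ 2) * Real.sqrt (∑' i, g i ^ 2) :=
        Real.sqrt_mul (tsum_nonneg fun i => sq_nonneg _) _




lemma summable_one_dim {p : ℝ} (hp : 1/2 < p) :
    Summable (fun n : ℤ => (1 + (n : ℝ) ^ 2) ^ (-p)) := by
  have h2p : 1 < 2 * p := by linarith
  have hmaj : Summable (fun n : ℤ => |(n : ℝ)| ^ (-(2 * p)) + (if n = 0 then (1:ℝ) else 0)) := by
    apply (Real.summable_abs_int_rpow h2p).add
    apply summable_of_ne_finset_zero (s := ({0} : Finset ℤ))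
    intro n hn
    simp only [Finset.mem_singleton] at hn
    simp [hn]
  apply Summable.of_nonneg_of_le (fun n => Real.rpow_nonneg (by positivity) _) (fun n => ?_) hmaj
  by_cases hn : n = 0
  · subst hn
    simp [Real.zero_rpow (show -(2*p) ≠ 0 by intro h; nlinarith)]
  · have habs : (1:ℝ) ≤ |(n : ℝ)| := by
      rw [← Int.cast_abs]
      exact_mod_cast Int.one_le_abs (by exact_mod_cast hn)
    have h0 : (0:ℝ) < |(n : ℝ)| ^ 2 := by positivity
    have hle : |(n : ℝ)| ^ 2 ≤ 1 + (n : ℝ) ^ 2 := by rw [sq_abs]; linarith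
    have := Real.rpow_le_rpow_of_nonpos h0 hle (show -p ≤ 0 by linarith)
    have heq : (|(n : ℝ)| ^ 2) ^ (-p) = |(n : ℝ)| ^ (-(2 * p)) := by
      rw [← Real.rpow_natCast |(n : ℝ)| 2, ← Real.rpow_mul (abs_nonneg _)]
      norm_num
    simp only [hn, if_false, add_zero]
    rw [← heq]
    exact this

lemma summable_pi_prod {f : ℤ → ℝ} (hf0 : ∀ n, 0 ≤ f n) (hf : Summable f) :
    ∀ d : ℕ, Summable (fun j : Fin d → ℤ => ∏ i, f (j i)) := by
  intro d
  induction d with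
  | zero =>
      have he : (fun j : Fin 0 → ℤ => ∏ i, f (j i)) = fun _ => (1:ℝ) := by
        funext j; simp
      rw [he]
      exact ⟨1, hasSum_single (f := fun _ : Fin 0 → ℤ => (1:ℝ)) (fun i => i.elim0)
        fun b hb => (hb (funext fun i => i.elim0)).elim⟩
  | succ n ih =>
      have hg0 : (0 : (Fin n → ℤ) → ℝ) ≤ (fun j : Fin n → ℤ => ∏ i, f (j i)) :=
        fun j => Finset.prod_nonneg fun i _ => hf0 _
      have hf0' : (0 : ℤ → ℝ) ≤ f := fun x => hf0 x
      have h2 := Summable.mul_of_nonneg hf ih hf0' hg0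
      have h3 := (Fin.consEquiv fun _ => ℤ).symm.summable_iff.mpr h2
      apply h3.congr
      intro j
      simp [Fin.consEquiv, Fin.prod_univ_succ, Fin.tail]

lemma summable_jb_rpow_neg {d : ℕ} (hd : 1 ≤ d) {q : ℝ} (hq : (d : ℝ) < q) :
    Summable (fun j : Freq d => jb j ^ (-q)) := by
  have hd0 : (0:ℝ) < d := by exact_mod_cast hd
  set p := q / (2 * d) with hp
  have hp2 : 1/2 < p := by
    rw [hp, lt_div_iff₀ (by positivity)]
    linarith
  have h1 := summable_one_dim hp2
  have h1' : ∀ n : ℤ, 0 ≤ (1 + (n : ℝ) ^ 2) ^ (-p) := fun n => Real.rpow_nonneg (by positivity) _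
  have hprod := summable_pi_prod h1' h1 d
  apply Summable.of_nonneg_of_le (fun j => Real.rpow_nonneg (jb_nonneg j) _) (fun j => ?_) hprod
  -- jb j ^ (-q) ≤ ∏ i, (1 + j i ^2)^(-p)
  set T := 1 + ∑ i, ((j i : ℝ)) ^ 2 with hT
  have hT1 : (1:ℝ) ≤ T := by rw [hT]; nlinarith [sumsq_nonneg j]
  have hT0 : (0:ℝ) < T := by linarith
  have hjb : jb j = T ^ ((1:ℝ)/2) := by
    rw [jb, ← hT]; exact Real.sqrt_eq_rpow T
  have heq1 : jb j ^ (-q) = T ^ (-(q/2)) := by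
    rw [hjb, ← Real.rpow_mul hT0.le]
    congr 1
    ring
  have heq2 : T ^ (-(q/2)) = (T ^ ((d:ℝ))) ^ (-p) := by
    rw [← Real.rpow_mul hT0.le]
    congr 1
    rw [hp]
    field_simp
  have hprodpos : (0:ℝ) < ∏ i, (1 + ((j i : ℝ)) ^ 2) :=
    Finset.prod_pos fun i _ => by positivity
  have hprodle : ∏ i, (1 + ((j i : ℝ)) ^ 2) ≤ T ^ ((d:ℝ)) := by
    have h1 : ∏ i, (1 + ((j i : ℝ)) ^ 2) ≤ T ^ (d:ℕ) := by
      have hle : ∏ i, (1 + ((j i : ℝ)) ^ 2) ≤ ∏ _i : Fin d, T := by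
        apply Finset.prod_le_prod (fun i _ => by positivity)
        intro i _
        rw [hT]
        have : ((j i : ℝ)) ^ 2 ≤ ∑ i', ((j i' : ℝ)) ^ 2 :=
          Finset.single_le_sum (f := fun i' => ((j i' : ℝ)) ^ 2)
            (fun i' _ => sq_nonneg _) (Finset.mem_univ i)
        linarith
      simpa using hle
    rwa [← Real.rpow_natCast T d] at h1
  have h3 : (T ^ ((d:ℝ))) ^ (-p) ≤ (∏ i, (1 + ((j i : ℝ)) ^ 2)) ^ (-p) :=
    Real.rpow_le_rpow_of_nonpos hprodpos hprodle (by linarith)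
  have h4 : (∏ i, (1 + ((j i : ℝ)) ^ 2)) ^ (-p) = ∏ i, (1 + ((j i : ℝ)) ^ 2) ^ (-p) :=
    (Real.finset_prod_rpow Finset.univ (fun i => 1 + ((j i : ℝ)) ^ 2)
      (fun i _ => by positivity) (-p)).symm
  rw [heq1, heq2, ← h4]
  exact h3




lemma quarter_bound {t y : ℝ} (ht : 0 ≤ t) (hty : t ≤ |y|) :
    t ≤ (1 + y ^ 2) ^ ((1:ℝ)/4) * (1 + t ^ 2) ^ ((1:ℝ)/4) := by
  have h1 : t * t ≤ t * |y| := mul_le_mul_of_nonneg_left hty ht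
  have h2 : (t * t) * (t * t) ≤ (t * |y|) * (t * |y|) :=
    mul_self_le_mul_self (by positivity) h1
  have h4 : t ^ 4 ≤ (1 + y ^ 2) * (1 + t ^ 2) := by nlinarith [sq_abs y, sq_nonneg t, sq_nonneg y]
  have h5 : t = (t ^ (4:ℕ)) ^ ((1:ℝ)/4) := by
    rw [← Real.rpow_natCast t 4, ← Real.rpow_mul ht]
    norm_num
  calc t = (t ^ (4:ℕ)) ^ ((1:ℝ)/4) := h5
    _ ≤ ((1 + y ^ 2) * (1 + t ^ 2)) ^ ((1:ℝ)/4) :=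
        Real.rpow_le_rpow (by positivity) h4 (by norm_num)
    _ = (1 + y ^ 2) ^ ((1:ℝ)/4) * (1 + t ^ 2) ^ ((1:ℝ)/4) :=
        Real.mul_rpow (by positivity) (by positivity)

/-- shear equivalence `(m,n) ↦ (m+n, m)` on pairs of frequencies. -/
def shearE (d : ℕ) : (Freq d × Freq d) ≃ (Freq d × Freq d) where
  toFun p := (p.1 + p.2, p.1)
  invFun p := (p.2, p.1 - p.2)
  left_inv p := by simp
  right_inv p := by simp

/-- The main weighted convolution estimate. -/
lemma conv_bound (d : ℕ) (hd : 1 ≤ d) (σ : ℝ) (hσ0 : 0 < σ) (hσ : (d:ℝ) < 2*σ) :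
    ∃ C : ℝ, 0 < C ∧ ∀ φ ψ : Freq d → ℝ, (∀ m, 0 ≤ φ m) → (∀ m, 0 ≤ ψ m) →
    Summable (fun m : Freq d => jb m ^ (2*σ) * φ m ^ 2) →
    Summable (fun m : Freq d => jb m ^ (2*σ) * ψ m ^ 2) →
    (∀ j : Freq d, Summable (fun m : Freq d => φ m * ψ (j - m))) ∧
    Summable (fun j : Freq d => jb j ^ (2*σ) * (∑' m : Freq d, φ m * ψ (j - m)) ^ 2) ∧
      ∑' j : Freq d, jb j ^ (2*σ) * (∑' m : Freq d, φ m * ψ (j - m)) ^ 2 ≤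
        C * ((∑' m : Freq d, jb m ^ (2*σ) * φ m ^ 2) * (∑' m : Freq d, jb m ^ (2*σ) * ψ m ^ 2)) := by
  have hK : Summable (fun m : Freq d => jb m ^ (-(2*σ))) :=
    summable_jb_rpow_neg hd (by linarith)
  set K := ∑' m : Freq d, jb m ^ (-(2*σ)) with hKdef
  have hK0 : 0 ≤ K := tsum_nonneg fun m => Real.rpow_nonneg (jb_nonneg m) _
  refine ⟨2 ^ (2*σ+2) * (K+1), by positivity, ?_⟩
  intro φ ψ hφ0 hψ0 hφ hψ
  set F : Freq d → ℝ := fun m => jb m ^ (2*σ) * φ m ^ 2 with hFdef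
  set H : Freq d → ℝ := fun m => jb m ^ (2*σ) * ψ m ^ 2 with hHdef
  have hF0 : ∀ m, 0 ≤ F m := fun m => mul_nonneg (Real.rpow_nonneg (jb_nonneg m) _) (sq_nonneg _)
  have hH0 : ∀ m, 0 ≤ H m := fun m => mul_nonneg (Real.rpow_nonneg (jb_nonneg m) _) (sq_nonneg _)
  -- the product function G(j,m) = F m * H (j - m) is summable
  have hFH : Summable (fun p : Freq d × Freq d => F p.1 * H p.2) :=
    Summable.mul_of_nonneg hφ hψ (fun m => hF0 m) (fun m => hH0 m)
  set G : Freq d × Freq d → ℝ := fun p => F p.2 * H (p.1 - p.2) with hGdef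
  have hGcomp : (G ∘ (shearE d)) = fun p : Freq d × Freq d => F p.1 * H p.2 := by
    funext p
    simp [hGdef, shearE]
  have hG : Summable G := ((shearE d).summable_iff).mp (hGcomp ▸ hFH)
  have hG0 : ∀ p : Freq d × Freq d, 0 ≤ G p := fun p => mul_nonneg (hF0 _) (hH0 _)
  have hGmar := (summable_prod_of_nonneg hG0).mp hG
  obtain ⟨hGfib, hGrow⟩ := hGmar
  set S : Freq d → ℝ := fun j => ∑' m : Freq d, G (j, m) with hSdef
  have hS0 : ∀ j, 0 ≤ S j := fun j => tsum_nonneg fun m => hG0 _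
  have hGsum : ∑' j : Freq d, S j = (∑' m : Freq d, F m) * (∑' m : Freq d, H m) := by
    rw [← Summable.tsum_prod' hG hGfib]
    rw [← (shearE d).tsum_eq G]
    have : ∀ p : Freq d × Freq d, G (shearE d p) = F p.1 * H p.2 := fun p =>
      congrFun hGcomp p
    rw [tsum_congr this, Summable.tsum_prod' hFH (fun b => hψ.mul_left (F b))]
    simp_rw [tsum_mul_left]
    rw [tsum_mul_right]
  -- ℓ¹ and ℓ∞ facts
  have hψ2 : Summable (fun m : Freq d => ψ m ^ 2) := by
    apply Summable.of_nonneg_of_le (fun m => sq_nonneg _) (fun m => ?_) hψ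
    have h1 : (1:ℝ) ≤ jb m ^ (2*σ) := Real.one_le_rpow (one_le_jb m) (by linarith)
    show ψ m ^ 2 ≤ jb m ^ (2*σ) * ψ m ^ 2
    nlinarith [sq_nonneg (ψ m)]
  have hψB : ∀ n, ψ n ≤ Real.sqrt (∑' m : Freq d, H m) := by
    intro n
    have h1 : ψ n ^ 2 ≤ H n := by
      have h2 := Real.one_le_rpow (one_le_jb n) (show (0:ℝ) ≤ 2*σ by linarith)
      show ψ n ^ 2 ≤ jb n ^ (2*σ) * ψ n ^ 2
      nlinarith [sq_nonneg (ψ n)]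
    have h2 : H n ≤ ∑' m, H m := Summable.le_tsum hψ n fun m _ => hH0 m
    calc ψ n = Real.sqrt (ψ n ^ 2) := (Real.sqrt_sq (hψ0 n)).symm
      _ ≤ Real.sqrt (∑' m, H m) := Real.sqrt_le_sqrt (by linarith)
  have hφ1 : Summable φ := by
    have h := tsum_cs (fun m : Freq d => jb m ^ σ * φ m) (fun m => jb m ^ (-σ))
      (fun m => mul_nonneg (Real.rpow_nonneg (jb_nonneg m) _) (hφ0 m))
      (fun m => Real.rpow_nonneg (jb_nonneg m) _) ?_ ?_
    · apply h.1.congr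
      intro m
      rw [mul_assoc, mul_comm (φ m), ← mul_assoc, ← Real.rpow_add (jb_pos m)]
      simp
    · apply hφ.congr
      intro m
      show jb m ^ (2*σ) * φ m ^ 2 = (jb m ^ σ * φ m) ^ 2
      rw [← rpow_two_mul (jb_pos m) σ]
      ring
    · apply hK.congr
      intro m
      show jb m ^ (-(2*σ)) = (jb m ^ (-σ)) ^ 2
      rw [rpow_two_mul (jb_pos m) (-σ)]
      congr 1
      ring
  have hconv : ∀ j : Freq d, Summable (fun m : Freq d => φ m * ψ (j - m)) := by
    intro j
    apply Summable.of_nonneg_of_le (fun m => mul_nonneg (hφ0 m) (hψ0 _)) (fun m => ?_)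
      (hφ1.mul_right (Real.sqrt (∑' m : Freq d, H m)))
    exact mul_le_mul_of_nonneg_left (hψB _) (hφ0 m)
  refine ⟨hconv, ?_⟩
  set c : Freq d → ℝ := fun j => ∑' m : Freq d, φ m * ψ (j - m) with hcdef
  have hc0 : ∀ j, 0 ≤ c j := fun j => tsum_nonneg fun m => mul_nonneg (hφ0 m) (hψ0 _)
  -- per-j Cauchy-Schwarz bounds
  have hbound : ∀ j : Freq d, jb j ^ (2*σ) * c j ^ 2 ≤ 2 ^ (2*σ+2) * K * S j := by
    intro j
    -- summability of shifted weights
    have hshift : Summable (fun m : Freq d => jb (j - m) ^ (-(2*σ))) := by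
      have := (Equiv.subLeft j).summable_iff.mpr hK
      apply this.congr
      intro m
      simp [Equiv.subLeft]
    have hshiftsum : ∑' m : Freq d, jb (j - m) ^ (-(2*σ)) = K := by
      rw [hKdef, ← (Equiv.subLeft j).tsum_eq (fun m => jb m ^ (-(2*σ)))]
      rfl
    -- c₁ bound
    have hcs1 := tsum_cs (fun m : Freq d => (jb m ^ σ * φ m) * (jb (j-m) ^ σ * ψ (j-m)))
      (fun m => jb (j-m) ^ (-σ))
      (fun m => mul_nonneg (mul_nonneg (Real.rpow_nonneg (jb_nonneg m) _) (hφ0 m))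
        (mul_nonneg (Real.rpow_nonneg (jb_nonneg _) _) (hψ0 _)))
      (fun m => Real.rpow_nonneg (jb_nonneg _) _) ?_ ?_
    rotate_left
    · apply (hGfib j).congr
      intro m
      show F m * H (j - m) = ((jb m ^ σ * φ m) * (jb (j-m) ^ σ * ψ (j-m))) ^ 2
      simp only [hFdef, hHdef]
      rw [← rpow_two_mul (jb_pos m) σ, ← rpow_two_mul (jb_pos (j-m)) σ]
      ring
    · apply hshift.congr
      intro m
      show jb (j - m) ^ (-(2*σ)) = (jb (j-m) ^ (-σ)) ^ 2
      rw [rpow_two_mul (jb_pos (j-m)) (-σ)]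
      congr 1
      ring
    have hcancel : ∀ n : Freq d, jb n ^ σ * jb n ^ (-σ) = 1 := by
      intro n
      rw [← Real.rpow_add (jb_pos n)]
      simp
    -- identify the sums in the CS bound
    have eS : ∑' m : Freq d, ((jb m ^ σ * φ m) * (jb (j-m) ^ σ * ψ (j-m))) ^ 2 = S j := by
      apply tsum_congr
      intro m
      show _ = F m * H (j - m)
      simp only [hFdef, hHdef]
      rw [← rpow_two_mul (jb_pos m) σ, ← rpow_two_mul (jb_pos (j-m)) σ]
      ring
    have eK1 : ∑' m : Freq d, (jb (j-m) ^ (-σ)) ^ 2 = K := by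
      rw [← hshiftsum]
      apply tsum_congr
      intro m
      rw [rpow_two_mul (jb_pos (j-m)) (-σ)]
      congr 1
      ring
    -- c1 pieces
    have key1 : ∀ m : Freq d, (jb m ^ σ * φ m * (jb (j - m) ^ σ * ψ (j - m))) * (jb (j - m) ^ (-σ))
        = (jb m ^ σ * φ m) * ψ (j - m) := by
      intro m
      rw [show jb m ^ σ * φ m * (jb (j - m) ^ σ * ψ (j - m)) * jb (j - m) ^ (-σ)
        = (jb (j - m) ^ σ * jb (j - m) ^ (-σ)) * (jb m ^ σ * φ m * ψ (j - m)) by ring,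
        hcancel, one_mul]
    have hc1s : Summable (fun m : Freq d => (jb m ^ σ * φ m) * ψ (j - m)) :=
      hcs1.1.congr key1
    have hc1le : ∑' m : Freq d, (jb m ^ σ * φ m) * ψ (j - m) ≤ Real.sqrt (S j) * Real.sqrt K := by
      have h := hcs1.2
      rw [eS, eK1, tsum_congr key1] at h
      exact h
    -- c2 pieces
    have hcs2 := tsum_cs (fun m : Freq d => (jb m ^ σ * φ m) * (jb (j-m) ^ σ * ψ (j-m)))
      (fun m => jb m ^ (-σ))
      (fun m => mul_nonneg (mul_nonneg (Real.rpow_nonneg (jb_nonneg m) _) (hφ0 m))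
        (mul_nonneg (Real.rpow_nonneg (jb_nonneg _) _) (hψ0 _)))
      (fun m => Real.rpow_nonneg (jb_nonneg _) _) ?_ ?_
    rotate_left
    · apply (hGfib j).congr
      intro m
      show F m * H (j - m) = ((jb m ^ σ * φ m) * (jb (j-m) ^ σ * ψ (j-m))) ^ 2
      simp only [hFdef, hHdef]
      rw [← rpow_two_mul (jb_pos m) σ, ← rpow_two_mul (jb_pos (j-m)) σ]
      ring
    · apply hK.congr
      intro m
      show jb m ^ (-(2*σ)) = (jb m ^ (-σ)) ^ 2
      rw [rpow_two_mul (jb_pos m) (-σ)]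
      congr 1
      ring
    have eK2 : ∑' m : Freq d, (jb m ^ (-σ)) ^ 2 = K := by
      apply tsum_congr
      intro m
      rw [rpow_two_mul (jb_pos m) (-σ)]
      congr 1
      ring
    have key2 : ∀ m : Freq d, (jb m ^ σ * φ m * (jb (j - m) ^ σ * ψ (j - m))) * (jb m ^ (-σ))
        = φ m * (jb (j-m) ^ σ * ψ (j-m)) := by
      intro m
      rw [show jb m ^ σ * φ m * (jb (j - m) ^ σ * ψ (j - m)) * jb m ^ (-σ)
        = (jb m ^ σ * jb m ^ (-σ)) * (φ m * (jb (j-m) ^ σ * ψ (j-m))) by ring, hcancel, one_mul]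
    have hc2s : Summable (fun m : Freq d => φ m * (jb (j-m) ^ σ * ψ (j-m))) :=
      hcs2.1.congr key2
    have hc2le : ∑' m : Freq d, φ m * (jb (j-m) ^ σ * ψ (j-m))
        ≤ Real.sqrt (S j) * Real.sqrt K := by
      have h := hcs2.2
      rw [eS, eK2, tsum_congr key2] at h
      exact h
    -- triangle inequality step
    have htri : jb j ^ σ * c j ≤ 2 ^ σ *
        ((∑' m : Freq d, (jb m ^ σ * φ m) * ψ (j - m))
          + ∑' m : Freq d, φ m * (jb (j-m) ^ σ * ψ (j-m))) := by
      have hL : jb j ^ σ * c j = ∑' m : Freq d, jb j ^ σ * (φ m * ψ (j - m)) := by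
        rw [tsum_mul_left]
      rw [hL, ← Summable.tsum_add hc1s hc2s, ← tsum_mul_left]
      apply Summable.tsum_le_tsum ?_ ((hconv j).mul_left _) (((hc1s.add hc2s)).mul_left _)
      intro m
      have hj : m + (j - m) = j := by abel
      have h1 : jb j ^ σ ≤ 2 ^ σ * (jb m ^ σ + jb (j - m) ^ σ) := by
        have h := jb_rpow_triangle hσ0.le m (j - m)
        rwa [hj] at h
      have h2 := mul_le_mul_of_nonneg_right h1 (mul_nonneg (hφ0 m) (hψ0 (j - m)))
      calc jb j ^ σ * (φ m * ψ (j - m))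
          ≤ 2 ^ σ * (jb m ^ σ + jb (j - m) ^ σ) * (φ m * ψ (j - m)) := h2
        _ = 2 ^ σ * ((jb m ^ σ * φ m) * ψ (j - m) + φ m * (jb (j-m) ^ σ * ψ (j-m))) := by ring
    have hfin : jb j ^ σ * c j ≤ 2 ^ (σ+1) * (Real.sqrt (S j) * Real.sqrt K) := by
      have h2 : (2:ℝ) ^ (σ+1) = 2 ^ σ * 2 := by
        rw [Real.rpow_add (by norm_num : (0:ℝ) < 2)]
        norm_num
      have h3 : (0:ℝ) ≤ 2 ^ σ := Real.rpow_nonneg (by norm_num) σ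
      calc jb j ^ σ * c j ≤ 2 ^ σ * ((∑' m : Freq d, (jb m ^ σ * φ m) * ψ (j - m))
            + ∑' m : Freq d, φ m * (jb (j-m) ^ σ * ψ (j-m))) := htri
        _ ≤ 2 ^ σ * (Real.sqrt (S j) * Real.sqrt K + Real.sqrt (S j) * Real.sqrt K) := by
            apply mul_le_mul_of_nonneg_left _ h3
            exact add_le_add hc1le hc2le
        _ = 2 ^ (σ+1) * (Real.sqrt (S j) * Real.sqrt K) := by rw [h2]; ring
    -- square both sides
    have hLnn : 0 ≤ jb j ^ σ * c j :=
      mul_nonneg (Real.rpow_nonneg (jb_nonneg j) σ) (hc0 j)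
    have hsq := pow_le_pow_left₀ hLnn hfin 2
    have hL2 : (jb j ^ σ * c j) ^ 2 = jb j ^ (2*σ) * c j ^ 2 := by
      rw [mul_pow, rpow_two_mul (jb_pos j)]
    have hR2 : (2 ^ (σ+1) * (Real.sqrt (S j) * Real.sqrt K)) ^ 2 = 2 ^ (2*σ+2) * K * S j := by
      rw [mul_pow, mul_pow, Real.sq_sqrt (hS0 j), Real.sq_sqrt hK0,
        rpow_two_mul (by norm_num : (0:ℝ) < 2) (σ+1)]
      ring_nf
    rw [hL2, hR2] at hsq
    exact hsq
  -- conclude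
  have hmajsum : Summable (fun j : Freq d => 2 ^ (2*σ+2) * K * S j) :=
    hGrow.mul_left _
  have hsummable : Summable (fun j : Freq d => jb j ^ (2*σ) * c j ^ 2) :=
    Summable.of_nonneg_of_le
      (fun j => mul_nonneg (Real.rpow_nonneg (jb_nonneg j) _) (sq_nonneg _)) hbound hmajsum
  refine ⟨hsummable, ?_⟩
  have hMnn : 0 ≤ (∑' m : Freq d, F m) * (∑' m : Freq d, H m) :=
    mul_nonneg (tsum_nonneg fun m => hF0 m) (tsum_nonneg fun m => hH0 m)
  calc ∑' j : Freq d, jb j ^ (2*σ) * c j ^ 2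
      ≤ ∑' j : Freq d, 2 ^ (2*σ+2) * K * S j := Summable.tsum_le_tsum hbound hsummable hmajsum
    _ = 2 ^ (2*σ+2) * K * ((∑' m : Freq d, F m) * (∑' m : Freq d, H m)) := by
        rw [tsum_mul_left, hGsum]
    _ ≤ 2 ^ (2*σ+2) * (K+1) * ((∑' m : Freq d, F m) * (∑' m : Freq d, H m)) := by
        apply mul_le_mul_of_nonneg_right _ hMnn
        have h3 : (0:ℝ) ≤ (2:ℝ) ^ (2*σ+2) := Real.rpow_nonneg (by norm_num) _
        nlinarith




variable {d : ℕ}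

lemma dotk_neg (k : Fin d → ℝ) (j : Freq d) : dotk k (-j) = - dotk k j := by
  rw [dotk, dotk, ← Finset.sum_neg_distrib]
  apply Finset.sum_congr rfl
  intro i _
  rw [Pi.neg_apply]
  push_cast
  ring

lemma dotk_sub (k : Fin d → ℝ) (a b : Freq d) : dotk k (a - b) = dotk k a - dotk k b := by
  rw [dotk, dotk, dotk, ← Finset.sum_sub_distrib]
  apply Finset.sum_congr rfl
  intro i _
  rw [Pi.sub_apply]
  push_cast
  ring

lemma norm_dAl (k : Fin d → ℝ) (u : Coeffs d) (n : Freq d) :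
    ‖dAl k u n‖ = |dotk k n| * ‖u n‖ := by
  rw [dAl]
  rw [norm_mul, norm_mul, Complex.norm_I, one_mul, Complex.norm_real, Real.norm_eq_abs]

lemma norm_conjC (u : Coeffs d) (j : Freq d) : ‖conjC u j‖ = ‖u (-j)‖ := by
  rw [conjC, RCLike.norm_conj]

/-- the weight sequences used in the bilinear estimate -/
def phiR (k : Fin d → ℝ) (R : Coeffs d) : Freq d → ℝ :=
  fun m => (1 + (dotk k m) ^ 2) ^ ((1:ℝ)/4) * ‖R (-m)‖

def psiR (k : Fin d → ℝ) (R : Coeffs d) : Freq d → ℝ :=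
  fun m => (1 + (dotk k m) ^ 2) ^ ((1:ℝ)/4) * ‖R m‖

lemma phiR_nonneg (k : Fin d → ℝ) (R : Coeffs d) (m : Freq d) : 0 ≤ phiR k R m := by
  rw [phiR]; positivity

lemma psiR_nonneg (k : Fin d → ℝ) (R : Coeffs d) (m : Freq d) : 0 ≤ psiR k R m := by
  rw [psiR]; positivity

lemma termU (k : Fin d → ℝ) {R : Coeffs d} (hR : Holo k R) {j m : Freq d}
    (hj : 0 ≤ dotk k j) :
    ‖conjC R m * dAl k R (j - m)‖ ≤ phiR k R m * psiR k R (j - m) := by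
  rw [norm_mul, norm_conjC, norm_dAl]
  by_cases h1 : R (-m) = 0
  · rw [h1]
    simp only [norm_zero, zero_mul]
    exact mul_nonneg (phiR_nonneg k R m) (psiR_nonneg k R (j - m))
  by_cases h2 : R (j - m) = 0
  · rw [h2]
    simp only [norm_zero, mul_zero]
    exact mul_nonneg (phiR_nonneg k R m) (psiR_nonneg k R (j - m))
  have hm : 0 ≤ dotk k m := by
    by_contra h
    push_neg at h
    exact h1 (hR (-m) (by rw [dotk_neg]; linarith))
  have hjm : dotk k (j - m) ≤ 0 := by
    by_contra h
    push_neg at h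
    exact h2 (hR _ h)
  set t := -(dotk k (j - m)) with htdef
  have ht : 0 ≤ t := by rw [htdef]; linarith
  have hty : t ≤ |dotk k m| := by
    rw [abs_of_nonneg hm, htdef, dotk_sub]
    linarith
  have hq := quarter_bound ht hty
  have ht2 : 1 + t ^ 2 = 1 + (dotk k (j - m)) ^ 2 := by rw [htdef]; ring
  rw [ht2] at hq
  have habs : |dotk k (j - m)| = t := by rw [htdef, abs_of_nonpos hjm]
  rw [habs, phiR, psiR]
  calc ‖R (-m)‖ * (t * ‖R (j - m)‖)
      ≤ ‖R (-m)‖ * (((1 + (dotk k m) ^ 2) ^ ((1:ℝ)/4) * (1 + (dotk k (j - m)) ^ 2) ^ ((1:ℝ)/4))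
        * ‖R (j - m)‖) := by
        apply mul_le_mul_of_nonneg_left _ (norm_nonneg _)
        exact mul_le_mul_of_nonneg_right hq (norm_nonneg _)
    _ = (1 + (dotk k m) ^ 2) ^ ((1:ℝ)/4) * ‖R (-m)‖
        * ((1 + (dotk k (j - m)) ^ 2) ^ ((1:ℝ)/4) * ‖R (j - m)‖) := by ring

lemma termV (k : Fin d → ℝ) {R : Coeffs d} (hR : Holo k R) {j m : Freq d}
    (hj : dotk k j ≤ 0) :
    ‖R m * dAl k (conjC R) (j - m)‖ ≤ psiR k R m * phiR k R (j - m) := by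
  rw [norm_mul, norm_dAl, norm_conjC]
  by_cases h1 : R m = 0
  · rw [h1]
    simp only [norm_zero, zero_mul]
    exact mul_nonneg (psiR_nonneg k R m) (phiR_nonneg k R (j - m))
  by_cases h2 : R (-(j - m)) = 0
  · rw [h2]
    simp only [norm_zero, mul_zero]
    exact mul_nonneg (psiR_nonneg k R m) (phiR_nonneg k R (j - m))
  have hm : dotk k m ≤ 0 := by
    by_contra h
    push_neg at h
    exact h1 (hR m h)
  have hjm : 0 ≤ dotk k (j - m) := by
    by_contra h
    push_neg at h
    apply h2
    apply hR
    rw [dotk_neg]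
    linarith
  set t := dotk k (j - m) with htdef
  have hty : t ≤ |dotk k m| := by
    rw [abs_of_nonpos hm, htdef, dotk_sub]
    linarith
  have hq := quarter_bound hjm hty
  have habs : |dotk k (j - m)| = t := abs_of_nonneg hjm
  rw [habs, phiR, psiR]
  calc ‖R m‖ * (t * ‖R (-(j - m))‖)
      ≤ ‖R m‖ * (((1 + (dotk k m) ^ 2) ^ ((1:ℝ)/4) * (1 + (dotk k (j - m)) ^ 2) ^ ((1:ℝ)/4))
        * ‖R (-(j - m))‖) := by
        apply mul_le_mul_of_nonneg_left _ (norm_nonneg _)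
        apply mul_le_mul_of_nonneg_right _ (norm_nonneg _)
        rw [htdef] at hq ⊢
        exact hq
    _ = (1 + (dotk k m) ^ 2) ^ ((1:ℝ)/4) * ‖R m‖
        * ((1 + (dotk k (j - m)) ^ 2) ^ ((1:ℝ)/4) * ‖R (-(j - m))‖) := by ring


end Aux

/-- **Lemma 6.3(ii) (Bound for `a` in terms of `A`).** Let `s > (d+1)/2`. There is a
constant `C = C(d,s,k)` such that for every holomorphic `R ∈ H^{s-1/2,1/2}(𝕋^d)`,
the function `a := i(P̄[conj(R)·∂_α R] − P[R·∂_α conj(R)])` satisfies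
`‖a‖_{H^{s-1/2}} ≤ C ‖R‖²_{H^{s-1/2,1/2}}`. -/
theorem frequency_shift_A_bound
    (d : ℕ) (hd : 1 ≤ d) (k : Fin d → ℝ) (hk : Indep k)
    (s : ℝ) (hs : ((d : ℝ) + 1) / 2 < s) :
    ∃ C : ℝ, 0 < C ∧
      ∀ R : Coeffs d, Holo k R → MemSob k (s - 1/2) (1/2) R →
        MemHs (s - 1/2) (aCf k R) ∧
        HsNorm (s - 1/2) (aCf k R) ≤ C * sobNorm k (s - 1/2) (1/2) R ^ 2 := by
  have hd1 : (1:ℝ) ≤ (d:ℝ) := by exact_mod_cast hd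
  have hσ0 : 0 < s - 1/2 := by linarith
  have hσd : (d:ℝ) < 2 * (s - 1/2) := by linarith
  obtain ⟨C, hC, hCb⟩ := Aux.conv_bound d hd (s - 1/2) hσ0 hσd
  refine ⟨2 * Real.sqrt C, mul_pos two_pos (Real.sqrt_pos.mpr hC), ?_⟩
  intro R hHol hMem
  have hq4 : ∀ x : ℝ, ((1 + x ^ 2) ^ ((1:ℝ)/4)) ^ 2 = (1 + x ^ 2) ^ ((1:ℝ)/2) := by
    intro x
    rw [Aux.rpow_two_mul (by positivity : (0:ℝ) < 1 + x ^ 2)]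
    norm_num
  have eψ : ∀ m : Freq d, wt k (s - 1/2) (1/2) m * ‖R m‖ ^ 2
      = jb m ^ (2 * (s - 1/2)) * Aux.psiR k R m ^ 2 := by
    intro m
    rw [wt, Aux.psiR, mul_pow, hq4]
    ring_nf
  have eφ : ∀ m : Freq d, wt k (s - 1/2) (1/2) (-m) * ‖R (-m)‖ ^ 2
      = jb m ^ (2 * (s - 1/2)) * Aux.phiR k R m ^ 2 := by
    intro m
    rw [wt, Aux.phiR, Aux.jb_neg, Aux.dotk_neg, neg_sq, mul_pow, hq4]
    ring_nf
  have hψS : Summable (fun m : Freq d => jb m ^ (2 * (s - 1/2)) * Aux.psiR k R m ^ 2) :=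
    Summable.congr hMem eψ
  have hnegS : Summable (fun m : Freq d => wt k (s - 1/2) (1/2) (-m) * ‖R (-m)‖ ^ 2) := by
    have h := (Equiv.neg (Freq d)).summable_iff.mpr
      (show Summable (fun j : Freq d => wt k (s - 1/2) (1/2) j * ‖R j‖ ^ 2) from hMem)
    apply h.congr
    intro m
    simp only [Function.comp_apply, Equiv.neg_apply]
  have hφS : Summable (fun m : Freq d => jb m ^ (2 * (s - 1/2)) * Aux.phiR k R m ^ 2) :=
    Summable.congr hnegS eφ
  have hMψ : ∑' m : Freq d, jb m ^ (2 * (s - 1/2)) * Aux.psiR k R m ^ 2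
      = ∑' j : Freq d, wt k (s - 1/2) (1/2) j * ‖R j‖ ^ 2 :=
    (tsum_congr eψ).symm
  have hMφ : ∑' m : Freq d, jb m ^ (2 * (s - 1/2)) * Aux.phiR k R m ^ 2
      = ∑' j : Freq d, wt k (s - 1/2) (1/2) j * ‖R j‖ ^ 2 := by
    rw [← tsum_congr eφ]
    exact Equiv.tsum_eq (Equiv.neg (Freq d)) (fun j => wt k (s - 1/2) (1/2) j * ‖R j‖ ^ 2)
  obtain ⟨hconv, hsum, hle⟩ := hCb (Aux.phiR k R) (Aux.psiR k R)
    (Aux.phiR_nonneg k R) (Aux.psiR_nonneg k R) hφS hψS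
  rw [hMφ, hMψ] at hle
  have hM2nn : 0 ≤ ∑' j : Freq d, wt k (s - 1/2) (1/2) j * ‖R j‖ ^ 2 :=
    tsum_nonneg fun j => mul_nonneg
      (mul_nonneg (Real.rpow_nonneg (Aux.jb_nonneg j) _) (Real.rpow_nonneg (by positivity) _))
      (sq_nonneg _)
  have hcnn : ∀ j : Freq d, 0 ≤ ∑' m : Freq d, Aux.phiR k R m * Aux.psiR k R (j - m) :=
    fun j => tsum_nonneg fun m => mul_nonneg (Aux.phiR_nonneg k R m) (Aux.psiR_nonneg k R _)
  -- swap lemma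
  have hswap : ∀ j : Freq d, Summable (fun m : Freq d => Aux.psiR k R m * Aux.phiR k R (j - m))
      ∧ ∑' m : Freq d, Aux.psiR k R m * Aux.phiR k R (j - m)
        = ∑' m : Freq d, Aux.phiR k R m * Aux.psiR k R (j - m) := by
    intro j
    have h2 : ∀ m : Freq d,
        ((fun m : Freq d => Aux.phiR k R m * Aux.psiR k R (j - m)) ∘ ⇑(Equiv.subLeft j)) m
        = Aux.psiR k R m * Aux.phiR k R (j - m) := by
      intro m
      simp only [Function.comp_apply, Equiv.subLeft_apply, sub_sub_cancel]
      ring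
    have h1 := ((Equiv.subLeft j).summable_iff.mpr (hconv j)).congr h2
    refine ⟨h1, ?_⟩
    rw [← Equiv.tsum_eq (Equiv.subLeft j) (fun m : Freq d => Aux.phiR k R m * Aux.psiR k R (j - m))]
    exact tsum_congr fun m => (h2 m).symm
  -- bound on the positive-frequency piece
  have hub : ∀ j : Freq d, 0 ≤ dotk k j →
      ‖cmul (conjC R) (dAl k R) j‖ ≤ ∑' m : Freq d, Aux.phiR k R m * Aux.psiR k R (j - m) := by
    intro j hj
    have hterm : ∀ m : Freq d, ‖conjC R m * dAl k R (j - m)‖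
        ≤ Aux.phiR k R m * Aux.psiR k R (j - m) := fun m => Aux.termU k hHol hj
    have hns : Summable (fun m : Freq d => ‖conjC R m * dAl k R (j - m)‖) :=
      Summable.of_nonneg_of_le (fun m => norm_nonneg _) hterm (hconv j)
    calc ‖cmul (conjC R) (dAl k R) j‖
        ≤ ∑' m : Freq d, ‖conjC R m * dAl k R (j - m)‖ := by
          simp only [cmul]
          exact norm_tsum_le_tsum_norm hns
      _ ≤ _ := Summable.tsum_le_tsum hterm hns (hconv j)
  have hvb : ∀ j : Freq d, dotk k j ≤ 0 →
      ‖cmul R (dAl k (conjC R)) j‖ ≤ ∑' m : Freq d, Aux.phiR k R m * Aux.psiR k R (j - m) := by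
    intro j hj
    obtain ⟨hsw, hsweq⟩ := hswap j
    have hterm : ∀ m : Freq d, ‖R m * dAl k (conjC R) (j - m)‖
        ≤ Aux.psiR k R m * Aux.phiR k R (j - m) := fun m => Aux.termV k hHol hj
    have hns : Summable (fun m : Freq d => ‖R m * dAl k (conjC R) (j - m)‖) :=
      Summable.of_nonneg_of_le (fun m => norm_nonneg _) hterm hsw
    calc ‖cmul R (dAl k (conjC R)) j‖
        ≤ ∑' m : Freq d, ‖R m * dAl k (conjC R) (j - m)‖ := by
          simp only [cmul]
          exact norm_tsum_le_tsum_norm hns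
      _ ≤ ∑' m : Freq d, Aux.psiR k R m * Aux.phiR k R (j - m) := Summable.tsum_le_tsum hterm hns hsw
      _ = _ := hsweq
  -- pointwise bound on a
  have hA : ∀ j : Freq d, ‖aCf k R j‖
      ≤ 2 * ∑' m : Freq d, Aux.phiR k R m * Aux.psiR k R (j - m) := by
    intro j
    rw [aCf, norm_mul, Complex.norm_I, one_mul]
    simp only [Pi.sub_apply, Pb, Pp]
    rcases lt_trichotomy (dotk k j) 0 with h | h | h
    · rw [if_pos h, if_pos h]
      have := hvb j h.le
      have h0 := hcnn j
      calc ‖cmul (conjC R) (dAl k R) j - cmul (conjC R) (dAl k R) j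
            - cmul R (dAl k (conjC R)) j‖
          = ‖cmul R (dAl k (conjC R)) j‖ := by rw [sub_self, zero_sub, norm_neg]
        _ ≤ _ := by linarith
    · rw [if_neg (by rw [h]; exact lt_irrefl 0), if_pos h,
        if_neg (by rw [h]; exact lt_irrefl 0), if_pos h]
      have h1 := hub j (le_of_eq h.symm)
      have h2 := hvb j (le_of_eq h)
      have hhalf : ∀ z : ℂ, ‖z / 2‖ = ‖z‖ / 2 := by
        intro z
        rw [norm_div]
        norm_num
      calc ‖cmul (conjC R) (dAl k R) j - cmul (conjC R) (dAl k R) j / 2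
            - cmul R (dAl k (conjC R)) j / 2‖
          ≤ ‖cmul (conjC R) (dAl k R) j - cmul (conjC R) (dAl k R) j / 2‖
            + ‖cmul R (dAl k (conjC R)) j / 2‖ := norm_sub_le _ _
        _ = ‖cmul (conjC R) (dAl k R) j‖ / 2 + ‖cmul R (dAl k (conjC R)) j‖ / 2 := by
            rw [show cmul (conjC R) (dAl k R) j - cmul (conjC R) (dAl k R) j / 2
              = cmul (conjC R) (dAl k R) j / 2 by ring, hhalf, hhalf]
        _ ≤ _ := by
            have h0 := hcnn j
            linarith
    · rw [if_neg (by linarith), if_neg (by linarith : ¬ dotk k j = 0),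
        if_neg (by linarith), if_neg (by linarith : ¬ dotk k j = 0)]
      have h1 := hub j h.le
      have h0 := hcnn j
      calc ‖cmul (conjC R) (dAl k R) j - 0 - 0‖ = ‖cmul (conjC R) (dAl k R) j‖ := by
            rw [sub_zero, sub_zero]
        _ ≤ _ := by linarith
  -- summability and final bound
  have hpt : ∀ j : Freq d, jb j ^ (2 * (s - 1/2)) * ‖aCf k R j‖ ^ 2
      ≤ 4 * (jb j ^ (2 * (s - 1/2))
          * (∑' m : Freq d, Aux.phiR k R m * Aux.psiR k R (j - m)) ^ 2) := by
    intro j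
    have h1 : ‖aCf k R j‖ ^ 2
        ≤ (2 * ∑' m : Freq d, Aux.phiR k R m * Aux.psiR k R (j - m)) ^ 2 :=
      pow_le_pow_left₀ (norm_nonneg _) (hA j) 2
    have h2 := mul_le_mul_of_nonneg_left h1
      (Real.rpow_nonneg (Aux.jb_nonneg j) (2 * (s - 1/2)))
    calc jb j ^ (2 * (s - 1/2)) * ‖aCf k R j‖ ^ 2
        ≤ jb j ^ (2 * (s - 1/2))
          * (2 * ∑' m : Freq d, Aux.phiR k R m * Aux.psiR k R (j - m)) ^ 2 := h2
      _ = 4 * (jb j ^ (2 * (s - 1/2))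
          * (∑' m : Freq d, Aux.phiR k R m * Aux.psiR k R (j - m)) ^ 2) := by ring
  have hmem : Summable (fun j : Freq d => jb j ^ (2 * (s - 1/2)) * ‖aCf k R j‖ ^ 2) :=
    Summable.of_nonneg_of_le
      (fun j => mul_nonneg (Real.rpow_nonneg (Aux.jb_nonneg j) _) (sq_nonneg _))
      hpt (hsum.mul_left 4)
  refine ⟨hmem, ?_⟩
  have hT : ∑' j : Freq d, jb j ^ (2 * (s - 1/2)) * ‖aCf k R j‖ ^ 2
      ≤ 4 * (C * ((∑' j : Freq d, wt k (s - 1/2) (1/2) j * ‖R j‖ ^ 2)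
        * ∑' j : Freq d, wt k (s - 1/2) (1/2) j * ‖R j‖ ^ 2)) := by
    calc ∑' j : Freq d, jb j ^ (2 * (s - 1/2)) * ‖aCf k R j‖ ^ 2
        ≤ ∑' j : Freq d, 4 * (jb j ^ (2 * (s - 1/2))
            * (∑' m : Freq d, Aux.phiR k R m * Aux.psiR k R (j - m)) ^ 2) :=
          Summable.tsum_le_tsum hpt hmem (hsum.mul_left 4)
      _ = 4 * ∑' j : Freq d, jb j ^ (2 * (s - 1/2))
            * (∑' m : Freq d, Aux.phiR k R m * Aux.psiR k R (j - m)) ^ 2 := tsum_mul_left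
      _ ≤ _ := by
          apply mul_le_mul_of_nonneg_left hle (by norm_num)
  rw [HsNorm, sobNorm, Real.sq_sqrt hM2nn]
  have hfin : (4:ℝ) * (C * ((∑' j : Freq d, wt k (s - 1/2) (1/2) j * ‖R j‖ ^ 2)
      * ∑' j : Freq d, wt k (s - 1/2) (1/2) j * ‖R j‖ ^ 2))
      = (2 * Real.sqrt C * ∑' j : Freq d, wt k (s - 1/2) (1/2) j * ‖R j‖ ^ 2) ^ 2 := by
    rw [mul_pow, mul_pow, Real.sq_sqrt hC.le]
    ring
  calc Real.sqrt (∑' j : Freq d, jb j ^ (2 * (s - 1/2)) * ‖aCf k R j‖ ^ 2)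
      ≤ Real.sqrt ((2 * Real.sqrt C
          * ∑' j : Freq d, wt k (s - 1/2) (1/2) j * ‖R j‖ ^ 2) ^ 2) := by
        apply Real.sqrt_le_sqrt
        rw [← hfin]
        exact hT
    _ = 2 * Real.sqrt C * ∑' j : Freq d, wt k (s - 1/2) (1/2) j * ‖R j‖ ^ 2 :=
        Real.sqrt_sq (mul_nonneg (mul_nonneg (by norm_num) (Real.sqrt_nonneg C)) hM2nn)


end
end
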